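/- arXiv:1910.11869 — 8 statements merged into one kernel-verified Lean document; each statement's English description precedes it below -/
import Mathlib

section
/- Let μ > 0 and let X be a nonnegative random variable with E[X²] < ∞. Let ρ₁ ∈ (0,1) satisfy ρ₁ = E[e^{−μ(1−ρ₁)X}]. Let T ~ Exp(μ(1−ρ₁)) and S ~ Exp(μ), with X, T, S mutually independent, and set Y = S + max(X − T, 0). Then E[Y²] = E[X²] − (2ρ₁/(μ(1−ρ₁)))·E[X] + 2/(μ²(1−ρ₁)). -/
open MeasureTheory ProbabilityTheory
open scoped ProbabilityTheory ENNReal NNReal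

section Helpers

open Real Set Filter Topology

lemma my_hasDerivAt_exp (θ t : ℝ) :
    HasDerivAt (fun s => rexp (-(θ*s))) (-θ * rexp (-(θ*t))) t := by
  have h : HasDerivAt (fun s : ℝ => -(θ*s)) (-θ) t := by
    exact ((hasDerivAt_id t).const_mul θ).neg.congr_deriv (by ring)
  simpa [mul_comm] using h.exp

lemma my_tendsto_poly_exp (θ : ℝ) (hθ : 0 < θ) (n : ℕ) :
    Tendsto (fun t : ℝ => t^n * rexp (-(θ*t))) atTop (𝓝 0) := by
  have h1 : Tendsto (fun t : ℝ => (θ*t)^n * rexp (-(θ*t))) atTop (𝓝 0) := by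
    have := (tendsto_pow_mul_exp_neg_atTop_nhds_zero n).comp
      (tendsto_id.const_mul_atTop hθ)
    simpa [Function.comp_def] using this
  have h2 := h1.div_const (θ^n)
  have heq : (fun t : ℝ => (θ*t)^n * rexp (-(θ*t)) / θ^n)
      = fun t : ℝ => t^n * rexp (-(θ*t)) := by
    funext t
    rw [mul_pow]
    field_simp
  rw [heq] at h2
  simpa using h2

lemma my_moment1 (θ : ℝ) (hθ : 0 < θ) :
    IntegrableOn (fun t : ℝ => (θ * rexp (-(θ*t))) * t) (Ioi 0) volume ∧
    ∫ t in Ioi (0:ℝ), (θ * rexp (-(θ*t))) * t = 1/θ := by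
  set g : ℝ → ℝ := fun t => -(t * rexp (-(θ*t))) - rexp (-(θ*t))/θ with hg
  have hcont : ContinuousWithinAt g (Ici 0) 0 := by
    apply Continuous.continuousWithinAt
    fun_prop
  have hderiv : ∀ t ∈ Ioi (0:ℝ), HasDerivAt g ((θ * rexp (-(θ*t))) * t) t := by
    intro t _
    have he := my_hasDerivAt_exp θ t
    have := (((hasDerivAt_id t).mul he).neg).sub (he.div_const θ)
    refine this.congr_deriv ?_
    simp only [id]
    field_simp
    ring
  have hnn : ∀ t ∈ Ioi (0:ℝ), 0 ≤ (θ * rexp (-(θ*t))) * t := fun t ht =>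
    mul_nonneg (by positivity) (le_of_lt ht)
  have hlim : Tendsto g atTop (𝓝 0) := by
    have := ((my_tendsto_poly_exp θ hθ 1).neg).sub ((my_tendsto_poly_exp θ hθ 0).div_const θ)
    simpa [hg] using this
  refine ⟨integrableOn_Ioi_deriv_of_nonneg hcont hderiv hnn hlim, ?_⟩
  rw [integral_Ioi_of_hasDerivAt_of_nonneg hcont hderiv hnn hlim]
  simp [hg]

lemma my_moment2 (θ : ℝ) (hθ : 0 < θ) :
    IntegrableOn (fun t : ℝ => (θ * rexp (-(θ*t))) * t^2) (Ioi 0) volume ∧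
    ∫ t in Ioi (0:ℝ), (θ * rexp (-(θ*t))) * t^2 = 2/θ^2 := by
  set g : ℝ → ℝ := fun t => -(t^2 * rexp (-(θ*t))) - (2/θ)*(t * rexp (-(θ*t)))
    - (2/θ^2)*rexp (-(θ*t)) with hg
  have hcont : ContinuousWithinAt g (Ici 0) 0 := by
    apply Continuous.continuousWithinAt
    fun_prop
  have hderiv : ∀ t ∈ Ioi (0:ℝ), HasDerivAt g ((θ * rexp (-(θ*t))) * t^2) t := by
    intro t _
    have he := my_hasDerivAt_exp θ t
    have := ((((hasDerivAt_pow 2 t).mul he).neg).sub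
      (((hasDerivAt_id t).mul he).const_mul (2/θ))).sub (he.const_mul (2/θ^2))
    refine this.congr_deriv ?_
    simp only [id]
    field_simp
    ring
  have hnn : ∀ t ∈ Ioi (0:ℝ), 0 ≤ (θ * rexp (-(θ*t))) * t^2 := fun t _ => by positivity
  have hlim : Tendsto g atTop (𝓝 0) := by
    have := (((my_tendsto_poly_exp θ hθ 2).neg).sub
      ((my_tendsto_poly_exp θ hθ 1).const_mul (2/θ))).sub
      ((my_tendsto_poly_exp θ hθ 0).const_mul (2/θ^2))
    simpa [hg, mul_comm] using this
  refine ⟨integrableOn_Ioi_deriv_of_nonneg hcont hderiv hnn hlim, ?_⟩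
  rw [integral_Ioi_of_hasDerivAt_of_nonneg hcont hderiv hnn hlim]
  simp [hg]

lemma my_trunc_split (θ x : ℝ) (hx : 0 ≤ x) (k : ℕ) (hk : k ≠ 0)
    (F : ℝ → ℝ) (hF : ∀ t, HasDerivAt F ((θ * rexp (-(θ*t))) * (x - t)^k) t) :
    ∫ t in Ioi (0:ℝ), (θ * rexp (-(θ*t))) * max (x - t) 0 ^ k = F x - F 0 := by
  have hcontf : Continuous fun t : ℝ => (θ * rexp (-(θ*t))) * max (x - t) 0 ^ k := by
    fun_prop
  have hzero : ∀ t ∈ Ioi x, (θ * rexp (-(θ*t))) * max (x - t) 0 ^ k = 0 := fun t ht => by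
    rw [max_eq_right (by simp only [mem_Ioi] at ht; linarith), zero_pow hk, mul_zero]
  have hsplit : Ioi (0:ℝ) = Ioc 0 x ∪ Ioi x := (Set.Ioc_union_Ioi_eq_Ioi hx).symm
  rw [hsplit, setIntegral_union (Set.Ioc_disjoint_Ioi le_rfl) measurableSet_Ioi
    (hcontf.integrableOn_Ioc)
    ((integrableOn_congr_fun hzero measurableSet_Ioi).mpr integrableOn_zero),
    setIntegral_congr_fun measurableSet_Ioi hzero, integral_zero, add_zero,
    ← intervalIntegral.integral_of_le hx]
  have hcg : EqOn (fun t : ℝ => (θ * rexp (-(θ*t))) * max (x - t) 0 ^ k)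
      (fun t : ℝ => (θ * rexp (-(θ*t))) * (x - t) ^ k) (Set.uIcc 0 x) := by
    intro t ht
    rw [Set.uIcc_of_le hx] at ht
    simp only
    rw [max_eq_left (by linarith [ht.2])]
  rw [intervalIntegral.integral_congr hcg,
    intervalIntegral.integral_eq_sub_of_hasDerivAt (fun t _ => hF t)
      (Continuous.intervalIntegrable (by fun_prop) 0 x)]

lemma my_trunc1 (θ x : ℝ) (hθ : 0 < θ) (hx : 0 ≤ x) :
    ∫ t in Ioi (0:ℝ), (θ * rexp (-(θ*t))) * max (x - t) 0
      = x - (1 - rexp (-(θ*x)))/θ := by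
  have := my_trunc_split θ x hx 1 one_ne_zero
    (fun t => -((x - t) * rexp (-(θ*t))) + rexp (-(θ*t))/θ) (fun t => by
      have he := my_hasDerivAt_exp θ t
      have := ((((hasDerivAt_const t x).sub (hasDerivAt_id t)).mul he).neg).add
        (he.div_const θ)
      refine this.congr_deriv ?_
      simp only [Pi.sub_apply, id]
      field_simp
      ring)
  simp only [pow_one] at this
  rw [this]
  simp only [sub_self, zero_mul, neg_zero, zero_add, mul_zero, neg_mul, exp_zero, sub_zero]
  field_simp
  ring

lemma my_trunc2 (θ x : ℝ) (hθ : 0 < θ) (hx : 0 ≤ x) :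
    ∫ t in Ioi (0:ℝ), (θ * rexp (-(θ*t))) * max (x - t) 0 ^ 2
      = x^2 - 2*x/θ + 2*(1 - rexp (-(θ*x)))/θ^2 := by
  have := my_trunc_split θ x hx 2 two_ne_zero
    (fun t => (-((x - t)^2) + 2*(x - t)/θ - 2/θ^2) * rexp (-(θ*t))) (fun t => by
      have he := my_hasDerivAt_exp θ t
      have hpoly : HasDerivAt (fun t : ℝ => -((x - t)^2) + 2*(x - t)/θ - 2/θ^2)
          (-(2*(x - t)*(0-1)) + 2*(0-1)/θ - 0) t := by
        exact ((((((hasDerivAt_const t x).sub (hasDerivAt_id t)).pow 2).neg).add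
          (((((hasDerivAt_const t x).sub (hasDerivAt_id t)).const_mul 2)).div_const θ))).sub
          (hasDerivAt_const t (2/θ^2)) |>.congr_deriv (by simp only [Pi.sub_apply, id_eq]; ring)
      have := hpoly.mul he
      refine this.congr_deriv ?_
      field_simp
      ring)
  rw [this]
  simp only [sub_self, zero_mul, neg_zero, zero_add, mul_zero, ne_eq, OfNat.ofNat_ne_zero,
    not_false_eq_true, zero_pow, sub_zero, exp_zero, mul_one]
  field_simp
  ring

lemma my_integral_expMeasure (θ : ℝ) (hθ : 0 < θ) (f : ℝ → ℝ) :
    ∫ t, f t ∂(expMeasure θ) = ∫ t in Set.Ioi (0:ℝ), (θ * Real.exp (-(θ*t))) * f t := by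
  have hd : expMeasure θ = volume.withDensity
      (fun t => ((if 0 ≤ t then θ * Real.exp (-(θ*t)) else 0 : ℝ).toNNReal : ℝ≥0∞)) := by
    rw [expMeasure, gammaMeasure]
    congr 1
    funext t
    rw [show gammaPDF 1 θ t = exponentialPDF θ t from rfl, exponentialPDF_eq, ENNReal.ofReal]
  have hmeas : Measurable fun t => (if 0 ≤ t then θ * Real.exp (-(θ*t)) else 0 : ℝ).toNNReal := by
    apply Measurable.real_toNNReal
    exact Measurable.ite measurableSet_Ici (by fun_prop) measurable_const
  rw [hd, integral_withDensity_eq_integral_smul hmeas f]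
  have heq : (fun t => ((if 0 ≤ t then θ * Real.exp (-(θ*t)) else 0 : ℝ).toNNReal : ℝ≥0) • f t)
      = fun t => (Set.Ici (0:ℝ)).indicator (fun t => (θ * Real.exp (-(θ*t))) * f t) t := by
    funext t
    rw [NNReal.smul_def, smul_eq_mul, Real.coe_toNNReal']
    by_cases h : (0:ℝ) ≤ t
    · rw [if_pos h, Set.indicator_of_mem (show t ∈ Set.Ici (0:ℝ) from h),
        max_eq_left (by positivity)]
    · rw [if_neg h, Set.indicator_of_notMem (show t ∉ Set.Ici (0:ℝ) from h), max_self, zero_mul]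
  rw [heq, integral_indicator measurableSet_Ici, integral_Ici_eq_integral_Ioi]

lemma my_integrable_expMeasure (θ : ℝ) (hθ : 0 < θ) (f : ℝ → ℝ) (hf : Measurable f)
    (h : IntegrableOn (fun t => (θ * Real.exp (-(θ*t))) * f t) (Ioi 0) volume) :
    Integrable f (expMeasure θ) := by
  have hd : expMeasure θ = volume.withDensity
      (fun t => ((if 0 ≤ t then θ * Real.exp (-(θ*t)) else 0 : ℝ).toNNReal : ℝ≥0∞)) := by
    rw [expMeasure, gammaMeasure]
    congr 1
    funext t
    rw [show gammaPDF 1 θ t = exponentialPDF θ t from rfl, exponentialPDF_eq, ENNReal.ofReal]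
  have hmeas : Measurable fun t => (if 0 ≤ t then θ * Real.exp (-(θ*t)) else 0 : ℝ).toNNReal := by
    apply Measurable.real_toNNReal
    exact Measurable.ite measurableSet_Ici (by fun_prop) measurable_const
  rw [hd, integrable_withDensity_iff_integrable_smul hmeas]
  have heq : (fun t => ((if 0 ≤ t then θ * Real.exp (-(θ*t)) else 0 : ℝ).toNNReal : ℝ≥0) • f t)
      = fun t => (Set.Ici (0:ℝ)).indicator (fun t => (θ * Real.exp (-(θ*t))) * f t) t := by
    funext t
    rw [NNReal.smul_def, smul_eq_mul, Real.coe_toNNReal']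
    by_cases h : (0:ℝ) ≤ t
    · rw [if_pos h, Set.indicator_of_mem (show t ∈ Set.Ici (0:ℝ) from h),
        max_eq_left (by positivity)]
    · rw [if_neg h, Set.indicator_of_notMem (show t ∉ Set.Ici (0:ℝ) from h), max_self, zero_mul]
  rw [heq, integrable_indicator_iff measurableSet_Ici]
  rw [IntegrableOn, Measure.restrict_congr_set Ioi_ae_eq_Ici] at h
  exact h

end Helpers

/-- Second identity of Proposition 2: the second moment of the inter-departure time
`Y = S + max (X - T) 0` in a stationary G/M/1 queue. -/
theorem second_moment_interdeparture
    {Ω : Type*} [MeasureSpace Ω] [IsProbabilityMeasure (ℙ : Measure Ω)]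
    (μ ρ₁ : ℝ) (hμ : 0 < μ) (hρ : ρ₁ ∈ Set.Ioo (0 : ℝ) 1)
    (X T S : Ω → ℝ)
    (hXmeas : Measurable X) (hTmeas : Measurable T) (hSmeas : Measurable S)
    (hXnonneg : ∀ ω, 0 ≤ X ω) (hXsq : Integrable (fun ω => (X ω) ^ 2) ℙ)
    (hfix : ρ₁ = ∫ ω, Real.exp (-(μ * (1 - ρ₁)) * X ω) ∂ℙ)
    (hTdist : Measure.map T ℙ = expMeasure (μ * (1 - ρ₁)))
    (hSdist : Measure.map S ℙ = expMeasure μ)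
    (hindep : iIndepFun ![X, T, S] ℙ) :
    ∫ ω, (S ω + max (X ω - T ω) 0) ^ 2 ∂ℙ
      = (∫ ω, (X ω) ^ 2 ∂ℙ) - 2 * ρ₁ / (μ * (1 - ρ₁)) * ∫ ω, X ω ∂ℙ
          + 2 / (μ ^ 2 * (1 - ρ₁)) := by
  obtain ⟨hρ0, hρ1⟩ := hρ
  set ν : ℝ := μ * (1 - ρ₁) with hνdef
  have hν : 0 < ν := mul_pos hμ (by linarith)
  set M : Ω → ℝ := fun ω => max (X ω - T ω) 0 with hMdef
  have hMmeas : Measurable M := (hXmeas.sub hTmeas).max measurable_const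
  -- T is a.e. nonnegative
  have hTae : ∀ᵐ ω ∂ℙ, 0 ≤ T ω := by
    have h0 : (ℙ : Measure Ω) (T ⁻¹' Set.Iio 0) = 0 := by
      rw [← Measure.map_apply hTmeas measurableSet_Iio, hTdist, expMeasure, gammaMeasure,
        withDensity_apply _ measurableSet_Iio]
      exact lintegral_gammaPDF_of_nonpos (le_refl (0:ℝ))
    rw [ae_iff]
    convert h0 using 2
    ext ω
    simp [not_le]
  have hMbound : ∀ᵐ ω ∂ℙ, 0 ≤ M ω ∧ M ω ≤ X ω := by
    filter_upwards [hTae] with ω hT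
    exact ⟨le_max_right _ _, max_le (by linarith [hXnonneg ω]) (hXnonneg ω)⟩
  -- integrability facts
  have hX1 : Integrable X ℙ := by
    refine (hXsq.add (integrable_const 1)).mono' hXmeas.aestronglyMeasurable ?_
    refine Filter.Eventually.of_forall fun ω => ?_
    simp only [Pi.add_apply]
    rw [Real.norm_eq_abs, abs_of_nonneg (hXnonneg ω)]
    nlinarith [hXnonneg ω]
  have hM1 : Integrable M ℙ := by
    refine hX1.mono' hMmeas.aestronglyMeasurable ?_
    filter_upwards [hMbound] with ω hb
    rw [Real.norm_eq_abs, abs_of_nonneg hb.1]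
    exact hb.2
  have hM2 : Integrable (fun ω => M ω ^ 2) ℙ := by
    refine hXsq.mono' (hMmeas.pow_const 2).aestronglyMeasurable ?_
    filter_upwards [hMbound] with ω hb
    rw [Real.norm_eq_abs, abs_of_nonneg (by positivity)]
    nlinarith [hb.1, hb.2]
  have hS1 : Integrable S ℙ :=
    (integrable_map_measure measurable_id.aestronglyMeasurable hSmeas.aemeasurable).mp
      (by rw [hSdist]; exact my_integrable_expMeasure μ hμ _ measurable_id (my_moment1 μ hμ).1)
  have hS2 : Integrable (fun ω => S ω ^ 2) ℙ :=
    (integrable_map_measure (measurable_id.pow_const 2).aestronglyMeasurable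
      hSmeas.aemeasurable).mp
      (by rw [hSdist]
          exact my_integrable_expMeasure μ hμ _ (measurable_id.pow_const 2) (my_moment2 μ hμ).1)
  -- moments of S
  have hES : ∫ ω, S ω ∂ℙ = 1/μ := by
    have h1 : ∫ ω, S ω ∂ℙ = ∫ t, t ∂(Measure.map S ℙ) :=
      (integral_map hSmeas.aemeasurable measurable_id.aestronglyMeasurable).symm
    rw [h1, hSdist, my_integral_expMeasure μ hμ _, (my_moment1 μ hμ).2]
  have hES2 : ∫ ω, S ω ^ 2 ∂ℙ = 2/μ^2 := by
    have h1 : ∫ ω, S ω ^ 2 ∂ℙ = ∫ t, t ^ 2 ∂(Measure.map S ℙ) :=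
      (integral_map hSmeas.aemeasurable
        (measurable_id.pow_const 2).aestronglyMeasurable).symm
    rw [h1, hSdist, my_integral_expMeasure μ hμ _, (my_moment2 μ hμ).2]
  -- independence facts
  have hmeas3 : ∀ i, Measurable (![X, T, S] i) := by
    intro i
    fin_cases i <;> assumption
  have hXT : IndepFun X T ℙ := hindep.indepFun (show (0:Fin 3) ≠ 1 by decide)
  have hMS : IndepFun M S ℙ := by
    have hp := hindep.indepFun_prodMk hmeas3 0 1 2 (by decide) (by decide)
    exact hp.comp ((measurable_fst.sub measurable_snd).max measurable_const) measurable_id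
  have hSM : Integrable (fun ω => S ω * M ω) ℙ := hMS.symm.integrable_mul hS1 hM1
  have hESM : ∫ ω, S ω * M ω ∂ℙ = (∫ ω, S ω ∂ℙ) * ∫ ω, M ω ∂ℙ :=
    hMS.symm.integral_fun_mul_eq_mul_integral hS1.aestronglyMeasurable hM1.aestronglyMeasurable
  -- joint law of (X, T)
  have hpairmeas : Measurable (fun ω => (X ω, T ω)) := hXmeas.prodMk hTmeas
  have hmap : Measure.map (fun ω => (X ω, T ω)) ℙ
      = (Measure.map X ℙ).prod (Measure.map T ℙ) :=
    (indepFun_iff_map_prod_eq_prod_map_map hXmeas.aemeasurable hTmeas.aemeasurable).mp hXT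
  have hφ1meas : Measurable (fun p : ℝ×ℝ => max (p.1 - p.2) 0) :=
    (measurable_fst.sub measurable_snd).max measurable_const
  have hXlaw_ae : ∀ᵐ x ∂(Measure.map X ℙ), 0 ≤ x :=
    (MeasureTheory.ae_map_iff hXmeas.aemeasurable measurableSet_Ici).mpr
      (Filter.Eventually.of_forall hXnonneg)
  have hXlaw1 : Integrable (fun x : ℝ => x) (Measure.map X ℙ) :=
    (integrable_map_measure measurable_id.aestronglyMeasurable hXmeas.aemeasurable).mpr hX1
  haveI : IsProbabilityMeasure (Measure.map X ℙ) :=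
    Measure.isProbabilityMeasure_map hXmeas.aemeasurable
  have hexpmeas : Measurable (fun x : ℝ => Real.exp (-(ν*x))) :=
    ((measurable_id.const_mul ν).neg).exp
  have hexplaw : Integrable (fun x : ℝ => Real.exp (-(ν*x))) (Measure.map X ℙ) := by
    refine (integrable_const 1).mono' hexpmeas.aestronglyMeasurable ?_
    filter_upwards [hXlaw_ae] with x hx
    rw [Real.norm_eq_abs, abs_of_nonneg (Real.exp_pos _).le]
    exact Real.exp_le_one_iff.mpr (by nlinarith [hν.le])
  have hrho : ∫ x, Real.exp (-(ν*x)) ∂(Measure.map X ℙ) = ρ₁ := by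
    rw [integral_map hXmeas.aemeasurable hexpmeas.aestronglyMeasurable]
    simp only [neg_mul] at hfix ⊢
    exact hfix.symm
  have hEXmap : ∫ x, x ∂(Measure.map X ℙ) = ∫ ω, X ω ∂ℙ :=
    integral_map hXmeas.aemeasurable measurable_id.aestronglyMeasurable
  -- E[M]
  have hEM : ∫ ω, M ω ∂ℙ = (∫ ω, X ω ∂ℙ) - (1 - ρ₁)/ν := by
    have hint1 : Integrable (fun p : ℝ×ℝ => max (p.1 - p.2) 0)
        ((Measure.map X ℙ).prod (Measure.map T ℙ)) := by
      rw [← hmap]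
      exact (integrable_map_measure hφ1meas.aestronglyMeasurable hpairmeas.aemeasurable).mpr hM1
    have h1 : ∫ ω, M ω ∂ℙ
        = ∫ p, max (p.1 - p.2) 0 ∂((Measure.map X ℙ).prod (Measure.map T ℙ)) := by
      rw [← hmap, integral_map hpairmeas.aemeasurable hφ1meas.aestronglyMeasurable]
    rw [h1, MeasureTheory.integral_prod _ hint1]
    have h2 : ∀ᵐ x ∂(Measure.map X ℙ),
        (∫ t, max (x - t) 0 ∂(Measure.map T ℙ)) = x - (1 - Real.exp (-(ν*x)))/ν := by
      filter_upwards [hXlaw_ae] with x hx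
      rw [hTdist, my_integral_expMeasure ν hν _, my_trunc1 ν x hν hx]
    have hg1 : Integrable (fun x : ℝ => (1 - Real.exp (-(ν*x)))/ν) (Measure.map X ℙ) :=
      ((integrable_const 1).sub hexplaw).div_const ν
    rw [integral_congr_ae h2, integral_sub hXlaw1 hg1, hEXmap]
    congr 1
    rw [integral_div, integral_sub (integrable_const 1) hexplaw, hrho]
    simp
  -- E[M^2]
  have hEM2 : ∫ ω, M ω ^ 2 ∂ℙ
      = (∫ ω, X ω ^ 2 ∂ℙ) - 2*(∫ ω, X ω ∂ℙ)/ν + 2*(1 - ρ₁)/ν^2 := by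
    have hφ2meas : Measurable (fun p : ℝ×ℝ => max (p.1 - p.2) 0 ^ 2) := hφ1meas.pow_const 2
    have hint2 : Integrable (fun p : ℝ×ℝ => max (p.1 - p.2) 0 ^ 2)
        ((Measure.map X ℙ).prod (Measure.map T ℙ)) := by
      rw [← hmap]
      exact (integrable_map_measure hφ2meas.aestronglyMeasurable hpairmeas.aemeasurable).mpr hM2
    have h1 : ∫ ω, M ω ^ 2 ∂ℙ
        = ∫ p, max (p.1 - p.2) 0 ^ 2 ∂((Measure.map X ℙ).prod (Measure.map T ℙ)) := by
      rw [← hmap, integral_map hpairmeas.aemeasurable hφ2meas.aestronglyMeasurable]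
    rw [h1, MeasureTheory.integral_prod _ hint2]
    have h2 : ∀ᵐ x ∂(Measure.map X ℙ),
        (∫ t, max (x - t) 0 ^ 2 ∂(Measure.map T ℙ))
          = x^2 - 2*x/ν + 2*(1 - Real.exp (-(ν*x)))/ν^2 := by
      filter_upwards [hXlaw_ae] with x hx
      rw [hTdist, my_integral_expMeasure ν hν _, my_trunc2 ν x hν hx]
    have hXlaw2 : Integrable (fun x : ℝ => x^2) (Measure.map X ℙ) :=
      (integrable_map_measure (measurable_id.pow_const 2).aestronglyMeasurable
        hXmeas.aemeasurable).mpr hXsq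
    have hEX2map : ∫ x, x^2 ∂(Measure.map X ℙ) = ∫ ω, X ω ^ 2 ∂ℙ :=
      integral_map hXmeas.aemeasurable (measurable_id.pow_const 2).aestronglyMeasurable
    have hg2 : Integrable (fun x : ℝ => 2*x/ν) (Measure.map X ℙ) :=
      (hXlaw1.const_mul 2).div_const ν
    have hg3 : Integrable (fun x : ℝ => 2*(1 - Real.exp (-(ν*x)))/ν^2) (Measure.map X ℙ) :=
      (((integrable_const 1).sub hexplaw).const_mul 2).div_const (ν^2)
    have hg4 : Integrable (fun x : ℝ => x^2 - 2*x/ν) (Measure.map X ℙ) := hXlaw2.sub hg2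
    rw [integral_congr_ae h2, integral_add hg4 hg3, integral_sub hXlaw2 hg2, hEX2map]
    congr 1
    · congr 1
      rw [integral_div, MeasureTheory.integral_const_mul, hEXmap]
    · rw [integral_div, MeasureTheory.integral_const_mul, integral_sub (integrable_const 1) hexplaw, hrho]
      simp
  -- expand the square
  have hexpand : (fun ω => (S ω + M ω)^2) =ᵐ[ℙ]
      fun ω => S ω^2 + (2*(S ω * M ω) + M ω^2) := by
    refine Filter.Eventually.of_forall fun ω => ?_
    ring
  have hadd2 : Integrable (fun ω => 2*(S ω * M ω)) ℙ := hSM.const_mul 2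
  have hadd1 : Integrable (fun ω => 2*(S ω * M ω) + M ω ^ 2) ℙ := hadd2.add hM2
  rw [show (∫ ω, (S ω + M ω) ^ 2 ∂ℙ) = ∫ ω, (S ω^2 + (2*(S ω * M ω) + M ω^2)) ∂ℙ
      from integral_congr_ae hexpand,
    integral_add hS2 hadd1, integral_add hadd2 hM2,
    MeasureTheory.integral_const_mul, hESM, hES, hES2, hEM, hEM2, hνdef]
  have h1 : (1:ℝ) - ρ₁ ≠ 0 := by linarith
  field_simp
  ring
end

section
/- Let μ > 0 and let X be a nonnegative integrable random variable. Let ρ₁ ∈ (0,1) satisfy ρ₁ = E[e^{−μ(1−ρ₁)X}], and set q₁ = E[X e^{−μ(1−ρ₁)X}]. Let T ~ Exp(μ(1−ρ₁)) and S ~ Exp(μ), with X, T, S mutually independent, and set Y = S + max(X − T, 0). Then E[T·Y] = E[X]/(μ(1−ρ₁)) − 1/(μ²(1−ρ₁)) + q₁/(μ(1−ρ₁)). -/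
open MeasureTheory ProbabilityTheory
open scoped ProbabilityTheory

namespace CrossCorrAux

open Real Set Filter
open scoped ENNReal NNReal Topology

noncomputable def epdf (ν x : ℝ) : ℝ≥0 := Real.toNNReal (if 0 ≤ x then ν * rexp (-(ν*x)) else 0)

lemma epdf_meas (ν : ℝ) : Measurable (epdf ν) := by
  apply Measurable.real_toNNReal
  exact Measurable.ite (measurableSet_Ici (a := (0:ℝ))) (by fun_prop) measurable_const

lemma expMeasure_eq (ν : ℝ) :
    expMeasure ν = volume.withDensity (fun x => (epdf ν x : ℝ≥0∞)) := by
  rw [expMeasure, gammaMeasure]; congr 1; funext x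
  rw [show gammaPDF 1 ν x = exponentialPDF ν x from rfl, exponentialPDF_eq]; rfl

lemma epdf_smul (ν : ℝ) (hν : 0 < ν) (g : ℝ → ℝ) (x : ℝ) :
    epdf ν x • g x = (if 0 ≤ x then ν * rexp (-(ν*x)) else 0) * g x := by
  rw [NNReal.smul_def, epdf, smul_eq_mul, Real.coe_toNNReal]
  split_ifs with h
  · positivity
  · exact le_rfl

lemma integral_expMeasure (ν : ℝ) (hν : 0 < ν) (g : ℝ → ℝ) :
    ∫ x, g x ∂(expMeasure ν) = ∫ x in Ioi 0, ν * rexp (-(ν*x)) * g x := by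
  rw [expMeasure_eq, integral_withDensity_eq_integral_smul (epdf_meas ν)]
  simp_rw [epdf_smul ν hν g]
  rw [← setIntegral_eq_integral_of_forall_compl_eq_zero (s := Ici 0)
      (fun x hx => by rw [if_neg (by simpa using hx), zero_mul]),
    integral_Ici_eq_integral_Ioi]
  exact setIntegral_congr_fun measurableSet_Ioi fun x hx => by rw [if_pos (le_of_lt hx)]

lemma integrable_expMeasure (ν : ℝ) (hν : 0 < ν) (g : ℝ → ℝ)
    (h : IntegrableOn (fun x => ν * rexp (-(ν*x)) * g x) (Ioi 0)) :
    Integrable g (expMeasure ν) := by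
  rw [expMeasure_eq, integrable_withDensity_iff_integrable_smul (epdf_meas ν)]
  simp_rw [epdf_smul ν hν g]
  rw [← integrableOn_univ, show (univ : Set ℝ) = Iio 0 ∪ Ici 0 by rw [Iio_union_Ici],
    integrableOn_union]
  constructor
  · exact (integrableOn_congr_fun (fun x hx => by rw [if_neg (not_le.mpr hx), zero_mul])
      measurableSet_Iio).mpr (integrableOn_zero)
  · rw [integrableOn_Ici_iff_integrableOn_Ioi]
    exact (integrableOn_congr_fun (fun x hx => by rw [if_pos (le_of_lt hx)])
      measurableSet_Ioi).mpr h

lemma expMeasure_Iio (ν : ℝ) : expMeasure ν (Iio 0) = 0 := by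
  rw [expMeasure_eq, withDensity_apply _ measurableSet_Iio]
  rw [setLIntegral_congr_fun (g := fun _ => 0) measurableSet_Iio
    (fun x (hx : x < 0) => by
      simp [epdf, if_neg (not_le.mpr hx)])]
  simp

lemma mul_atTop (ν : ℝ) (hν : 0 < ν) : Tendsto (fun t : ℝ => ν * t) atTop atTop := by
  simpa using (tendsto_const_mul_atTop_of_pos hν).mpr tendsto_id

lemma exp_tendsto (ν : ℝ) (hν : 0 < ν) :
    Tendsto (fun t => rexp (-(ν*t))) atTop (𝓝 0) := by
  apply Real.tendsto_exp_comp_nhds_zero.mpr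
  exact tendsto_neg_atBot_iff.mpr (mul_atTop ν hν)

lemma mul_exp_tendsto (ν : ℝ) (hν : 0 < ν) :
    Tendsto (fun t => t * rexp (-(ν*t))) atTop (𝓝 0) := by
  have B0 : Tendsto (fun u : ℝ => u * rexp (-u)) atTop (𝓝 0) := by
    simpa using tendsto_pow_mul_exp_neg_atTop_nhds_zero 1
  have B1 := (B0.comp (mul_atTop ν hν)).const_mul (1/ν)
  simp only [Function.comp] at B1
  rw [mul_zero] at B1
  refine B1.congr fun t => ?_
  field_simp

lemma mean_hasDeriv (ν : ℝ) (hν : 0 < ν) (t : ℝ) :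
    HasDerivAt (fun t => -(rexp (-(ν*t)) * (t + 1/ν))) (ν * rexp (-(ν*t)) * t) t := by
  have h1 : HasDerivAt (fun t : ℝ => -(ν*t)) (-ν) t := by
    simpa using (hasDerivAt_id t).const_mul (-ν)
  have h2 := h1.exp
  have h3 : HasDerivAt (fun t : ℝ => t + 1/ν) 1 t := (hasDerivAt_id t).add_const _
  have h4 := (h2.mul h3).neg
  refine h4.congr_deriv ?_
  field_simp
  ring

lemma mean_integrableOn (ν : ℝ) (hν : 0 < ν) :
    IntegrableOn (fun t => ν * rexp (-(ν*t)) * t) (Ioi 0) := by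
  apply integrableOn_Ioi_deriv_of_nonneg
    (Continuous.continuousWithinAt (by fun_prop))
    (fun t _ => mean_hasDeriv ν hν t)
    (fun t ht => by have h0 : (0:ℝ) < t := ht; positivity)
  have := ((mul_exp_tendsto ν hν).add ((exp_tendsto ν hν).const_mul (1/ν))).neg
  norm_num at this
  exact this.congr fun t => by ring

lemma mean_integral (ν : ℝ) (hν : 0 < ν) :
    ∫ t in Ioi 0, ν * rexp (-(ν*t)) * t = 1/ν := by
  rw [integral_Ioi_of_hasDerivAt_of_nonneg
    (Continuous.continuousWithinAt (by fun_prop))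
    (fun t _ => mean_hasDeriv ν hν t)
    (fun t ht => by have h0 : (0:ℝ) < t := ht; positivity)
    (l := 0) ?_]
  · simp
  · have := ((mul_exp_tendsto ν hν).add ((exp_tendsto ν hν).const_mul (1/ν))).neg
    norm_num at this
    exact this.congr fun t => by ring

lemma inner_hasDeriv (ν x : ℝ) (hν : 0 < ν) (t : ℝ) :
    HasDerivAt (fun t => rexp (-(ν*t)) * (t^2 + (2/ν - x)*t + (2/ν^2 - x/ν)))
      (ν * rexp (-(ν*t)) * (t * (x - t))) t := by
  have h1 : HasDerivAt (fun t : ℝ => -(ν*t)) (-ν) t := by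
    simpa using (hasDerivAt_id t).const_mul (-ν)
  have h2 := h1.exp
  have h3 : HasDerivAt (fun t : ℝ => t^2 + (2/ν - x)*t + (2/ν^2 - x/ν))
      (2*t + (2/ν - x)) t := by
    have := ((hasDerivAt_pow 2 t).add ((hasDerivAt_id t).const_mul (2/ν - x))).add_const
      (2/ν^2 - x/ν)
    simpa [mul_comm] using this
  refine (h2.mul h3).congr_deriv ?_
  field_simp
  ring

lemma inner_integral (ν x : ℝ) (hν : 0 < ν) (hx : 0 ≤ x) :
    ∫ t in Ioi 0, ν * rexp (-(ν*t)) * (t * max (x - t) 0)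
      = x/ν - 2/ν^2 + rexp (-(ν*x)) * (x/ν + 2/ν^2) := by
  have hcont : Continuous (fun t => ν * rexp (-(ν*t)) * (t * max (x - t) 0)) := by
    apply Continuous.mul (by fun_prop)
    exact continuous_id.mul ((continuous_const.sub continuous_id).max continuous_const)
  have hzero : ∀ t ∈ Ioi x, ν * rexp (-(ν*t)) * (t * max (x - t) 0) = 0 := by
    intro t ht
    rw [max_eq_right (by simp only [mem_Ioi] at ht; linarith), mul_zero, mul_zero]
  rw [← Ioc_union_Ioi_eq_Ioi hx,
    setIntegral_union (Ioc_disjoint_Ioi le_rfl) measurableSet_Ioi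
      (hcont.integrableOn_Ioc)
      ((integrableOn_congr_fun hzero measurableSet_Ioi).mpr integrableOn_zero),
    setIntegral_congr_fun measurableSet_Ioi hzero, integral_zero, add_zero,
    setIntegral_congr_fun measurableSet_Ioc
      (fun t ht => by rw [max_eq_left (by linarith [ht.2])]),
    ← intervalIntegral.integral_of_le hx,
    intervalIntegral.integral_eq_sub_of_hasDerivAt (fun t _ => inner_hasDeriv ν x hν t)
      (Continuous.intervalIntegrable (by fun_prop) 0 x)]
  have h0 : rexp (-(ν*0)) = 1 := by norm_num
  rw [h0]
  field_simp
  ring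

end CrossCorrAux

open CrossCorrAux Real Set in
/-- Third identity of Proposition 2: the cross-correlation between the system time `T`
and the inter-departure time `Y = S + max (X - T) 0` in a stationary G/M/1 queue. -/
theorem cross_correlation_systemTime_interdeparture
    {Ω : Type*} [MeasureSpace Ω] [IsProbabilityMeasure (ℙ : Measure Ω)]
    (μ ρ₁ : ℝ) (hμ : 0 < μ) (hρ : ρ₁ ∈ Set.Ioo (0 : ℝ) 1)
    (X T S : Ω → ℝ)
    (hXmeas : Measurable X) (hTmeas : Measurable T) (hSmeas : Measurable S)
    (hXnonneg : ∀ ω, 0 ≤ X ω) (hXint : Integrable X ℙ)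
    (hfix : ρ₁ = ∫ ω, Real.exp (-(μ * (1 - ρ₁)) * X ω) ∂ℙ)
    (hTdist : Measure.map T ℙ = expMeasure (μ * (1 - ρ₁)))
    (hSdist : Measure.map S ℙ = expMeasure μ)
    (hindep : iIndepFun ![X, T, S] ℙ) :
    ∫ ω, T ω * (S ω + max (X ω - T ω) 0) ∂ℙ
      = (∫ ω, X ω ∂ℙ) / (μ * (1 - ρ₁)) - 1 / (μ ^ 2 * (1 - ρ₁))
          + (∫ ω, X ω * Real.exp (-(μ * (1 - ρ₁)) * X ω) ∂ℙ) / (μ * (1 - ρ₁)) := by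
  set ν : ℝ := μ * (1 - ρ₁) with hνdef
  have h1ρ : 0 < 1 - ρ₁ := by linarith [hρ.2]
  have hν : 0 < ν := mul_pos hμ h1ρ
  -- integrability of identity under the exponential laws
  have hintIdν : Integrable (fun x : ℝ => x) (expMeasure ν) :=
    integrable_expMeasure ν hν _ (mean_integrableOn ν hν)
  have hintIdμ : Integrable (fun x : ℝ => x) (expMeasure μ) :=
    integrable_expMeasure μ hμ _ (mean_integrableOn μ hμ)
  -- integrability of T, S
  have hTint : Integrable T ℙ := by
    have h := (integrable_map_measure aestronglyMeasurable_id hTmeas.aemeasurable).mp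
      (by rw [hTdist]; exact hintIdν)
    exact h
  have hSint : Integrable S ℙ := by
    have h := (integrable_map_measure aestronglyMeasurable_id hSmeas.aemeasurable).mp
      (by rw [hSdist]; exact hintIdμ)
    exact h
  -- expectations of T and S
  have hET : ∫ ω, T ω ∂ℙ = 1/ν := by
    have h := integral_map (μ := (ℙ : Measure _)) (φ := T) hTmeas.aemeasurable (aestronglyMeasurable_id (α := ℝ))
    simp only [id_eq] at h
    rw [hTdist, integral_expMeasure ν hν (fun x => x), mean_integral ν hν] at h
    exact h.symm
  have hES : ∫ ω, S ω ∂ℙ = 1/μ := by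
    have h := integral_map (μ := (ℙ : Measure _)) (φ := S) hSmeas.aemeasurable (aestronglyMeasurable_id (α := ℝ))
    simp only [id_eq] at h
    rw [hSdist, integral_expMeasure μ hμ (fun x => x), mean_integral μ hμ] at h
    exact h.symm
  -- independence
  have hXT : IndepFun X T ℙ := by
    simpa using hindep.indepFun (show (0 : Fin 3) ≠ 1 by decide)
  have hTS : IndepFun T S ℙ := by
    simpa using hindep.indepFun (show (1 : Fin 3) ≠ 2 by decide)
  -- a.e. nonnegativity of T
  have hT0 : ∀ᵐ ω ∂ℙ, 0 ≤ T ω := by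
    rw [ae_iff]
    have : ℙ (T ⁻¹' (Iio 0)) = 0 := by
      rw [← Measure.map_apply hTmeas measurableSet_Iio, hTdist]
      exact expMeasure_Iio ν
    simpa [not_le, Set.preimage, Iio] using this
  -- integrability of the products
  have hXTint : Integrable (fun ω => X ω * T ω) ℙ := hXT.integrable_mul hXint hTint
  have hTSint : Integrable (fun ω => T ω * S ω) ℙ := hTS.integrable_mul hTint hSint
  have hTmaxmeas : Measurable (fun ω => T ω * max (X ω - T ω) 0) :=
    hTmeas.mul ((hXmeas.sub hTmeas).max measurable_const)
  have hTmaxint : Integrable (fun ω => T ω * max (X ω - T ω) 0) ℙ := by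
    refine hXTint.mono' hTmaxmeas.aestronglyMeasurable ?_
    filter_upwards [hT0] with ω h0
    rw [Real.norm_eq_abs, abs_mul, abs_of_nonneg h0, abs_of_nonneg (le_max_right _ _)]
    have hle : max (X ω - T ω) 0 ≤ X ω :=
      max_le (by linarith) (hXnonneg ω)
    calc T ω * max (X ω - T ω) 0 ≤ T ω * X ω := mul_le_mul_of_nonneg_left hle h0
      _ = X ω * T ω := mul_comm _ _
  -- split the integral
  have hsplit : ∫ ω, T ω * (S ω + max (X ω - T ω) 0) ∂ℙ
      = (∫ ω, T ω * S ω ∂ℙ) + ∫ ω, T ω * max (X ω - T ω) 0 ∂ℙ := by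
    rw [← integral_add hTSint hTmaxint]
    exact integral_congr_ae (Filter.Eventually.of_forall fun ω => by ring)
  -- first term
  have hterm1 : ∫ ω, T ω * S ω ∂ℙ = 1/ν * (1/μ) := by
    have h := hTS.integral_mul_eq_mul_integral hTint.aestronglyMeasurable hSint.aestronglyMeasurable
    rw [show (T * S) = fun ω => T ω * S ω from rfl] at h
    rw [h, hET, hES]
  -- joint law
  have hjoint : Measure.map (fun ω => (X ω, T ω)) ℙ
      = (Measure.map X ℙ).prod (expMeasure ν) := by
    rw [← hTdist]
    exact (indepFun_iff_map_prod_eq_prod_map_map hXmeas.aemeasurable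
      hTmeas.aemeasurable).mp hXT
  have hφc : Continuous (fun p : ℝ × ℝ => p.2 * max (p.1 - p.2) 0) :=
    continuous_snd.mul ((continuous_fst.sub continuous_snd).max continuous_const)
  haveI : IsProbabilityMeasure (expMeasure ν) := isProbabilityMeasure_expMeasure hν
  haveI : IsProbabilityMeasure (Measure.map X ℙ) :=
    Measure.isProbabilityMeasure_map hXmeas.aemeasurable
  -- integrability for Fubini
  have hid1 : Integrable (fun x : ℝ => x) (Measure.map X ℙ) :=
    (integrable_map_measure aestronglyMeasurable_id hXmeas.aemeasurable).mpr hXint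
  have hbound : Integrable (fun p : ℝ × ℝ => |p.1| * |p.2|)
      ((Measure.map X ℙ).prod (expMeasure ν)) :=
    Integrable.mul_prod hid1.abs hintIdν.abs
  have haeX : ∀ᵐ x ∂(Measure.map X ℙ), 0 ≤ x := by
    rw [ae_iff]
    have h0 : (Measure.map X ℙ) {x : ℝ | x < 0} = 0 := by
      rw [show {x : ℝ | x < 0} = Iio 0 from rfl,
        Measure.map_apply hXmeas measurableSet_Iio,
        show X ⁻¹' Iio 0 = ∅ from Set.eq_empty_of_forall_notMem
          (fun ω hω => absurd (hXnonneg ω) (not_le.mpr hω))]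
      simp
    simpa [not_le] using h0
  have hae1 : ∀ᵐ p ∂((Measure.map X ℙ).prod (expMeasure ν)), 0 ≤ p.1 ∧ 0 ≤ p.2 := by
    rw [ae_iff]
    have hsub : {p : ℝ × ℝ | ¬(0 ≤ p.1 ∧ 0 ≤ p.2)}
        ⊆ {p : ℝ × ℝ | p.1 < 0} ∪ {p : ℝ × ℝ | p.2 < 0} := by
      intro p hp
      simp only [Set.mem_setOf_eq, not_and_or, not_le] at hp
      exact hp
    refine measure_mono_null hsub ?_
    apply measure_union_null
    · have : {p : ℝ × ℝ | p.1 < 0} = Iio 0 ×ˢ (univ : Set ℝ) := by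
        ext p; simp
      rw [this, Measure.prod_prod]
      have h0 : (Measure.map X ℙ) (Iio 0) = 0 := by
        rw [Measure.map_apply hXmeas measurableSet_Iio,
          show X ⁻¹' Iio 0 = ∅ from Set.eq_empty_of_forall_notMem
            (fun ω hω => absurd (hXnonneg ω) (not_le.mpr hω))]
        simp
      rw [h0, zero_mul]
    · have : {p : ℝ × ℝ | p.2 < 0} = (univ : Set ℝ) ×ˢ Iio 0 := by
        ext p; simp
      rw [this, Measure.prod_prod, expMeasure_Iio, mul_zero]
  have hφint : Integrable (fun p : ℝ × ℝ => p.2 * max (p.1 - p.2) 0)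
      ((Measure.map X ℙ).prod (expMeasure ν)) := by
    refine hbound.mono' hφc.aestronglyMeasurable ?_
    filter_upwards [hae1] with p hp
    obtain ⟨h1, h2⟩ := hp
    rw [Real.norm_eq_abs, abs_mul, abs_of_nonneg h2, abs_of_nonneg (le_max_right _ _),
      abs_of_nonneg h1]
    have hle : max (p.1 - p.2) 0 ≤ p.1 := max_le (by linarith) h1
    nlinarith [mul_le_mul_of_nonneg_left hle h2]
  -- the cross term
  set q : ℝ := ∫ ω, X ω * Real.exp (-ν * X ω) ∂ℙ with hqdef
  have hterm2 : ∫ ω, T ω * max (X ω - T ω) 0 ∂ℙ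
      = (∫ ω, X ω ∂ℙ) * (1/ν) - 2/ν^2 + q * (1/ν) + ρ₁ * (2/ν^2) := by
    have e1 : ∫ ω, T ω * max (X ω - T ω) 0 ∂ℙ
        = ∫ p, p.2 * max (p.1 - p.2) 0 ∂((Measure.map X ℙ).prod (expMeasure ν)) := by
      rw [← hjoint, integral_map (hXmeas.aemeasurable.prodMk hTmeas.aemeasurable)
        hφc.aestronglyMeasurable]
    rw [e1, integral_prod _ hφint]
    have e2 : ∫ x, (∫ t, (x, t).2 * max ((x, t).1 - (x, t).2) 0 ∂(expMeasure ν))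
          ∂(Measure.map X ℙ)
        = ∫ x, (x/ν - 2/ν^2 + rexp (-(ν*x)) * (x/ν + 2/ν^2)) ∂(Measure.map X ℙ) := by
      refine integral_congr_ae ?_
      filter_upwards [haeX] with x hx
      rw [integral_expMeasure ν hν (fun t => t * max (x - t) 0), inner_integral ν x hν hx]
    rw [e2, integral_map hXmeas.aemeasurable
      (by fun_prop : Measurable fun x => x/ν - 2/ν^2 + rexp (-(ν*x)) * (x/ν + 2/ν^2)).aestronglyMeasurable]
    -- expand the integral
    have hexpint : Integrable (fun ω => rexp (-(ν * X ω))) ℙ := by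
      refine (integrable_const (1:ℝ)).mono'
        ((hXmeas.const_mul ν).neg.exp).aestronglyMeasurable ?_
      refine Filter.Eventually.of_forall fun ω => ?_
      rw [Real.norm_eq_abs, abs_of_nonneg (Real.exp_nonneg _)]
      exact Real.exp_le_one_iff.mpr (by simpa using mul_nonneg hν.le (hXnonneg ω))
    have hqint : Integrable (fun ω => rexp (-(ν * X ω)) * X ω) ℙ := by
      refine hXint.abs.mono'
        (((hXmeas.const_mul ν).neg.exp).mul hXmeas).aestronglyMeasurable ?_
      refine Filter.Eventually.of_forall fun ω => ?_
      rw [Real.norm_eq_abs, abs_mul, abs_of_nonneg (Real.exp_nonneg _)]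
      calc rexp (-(ν * X ω)) * |X ω| ≤ 1 * |X ω| := by
            apply mul_le_mul_of_nonneg_right _ (abs_nonneg _)
            exact Real.exp_le_one_iff.mpr (by simpa using mul_nonneg hν.le (hXnonneg ω))
        _ = |X ω| := one_mul _
    have hrw : (fun ω => X ω/ν - 2/ν^2 + rexp (-(ν * X ω)) * (X ω/ν + 2/ν^2))
        = fun ω => (X ω * (1/ν) - 2/ν^2)
            + ((rexp (-(ν * X ω)) * X ω) * (1/ν) + rexp (-(ν * X ω)) * (2/ν^2)) := by
      funext ω; ring
    have ha : Integrable (fun ω => X ω * (1/ν) - 2/ν^2) ℙ :=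
      (hXint.mul_const _).sub (integrable_const _)
    have hb : Integrable
        (fun ω => rexp (-(ν * X ω)) * X ω * (1/ν) + rexp (-(ν * X ω)) * (2/ν^2)) ℙ :=
      (hqint.mul_const _).add (hexpint.mul_const _)
    rw [hrw, integral_add ha hb,
      integral_sub (hXint.mul_const (1/ν)) (integrable_const (2/ν^2)),
      integral_add (hqint.mul_const (1/ν)) (hexpint.mul_const (2/ν^2)),
      integral_mul_const, integral_mul_const, integral_mul_const, integral_const]
    have hq' : ∫ ω, rexp (-(ν * X ω)) * X ω ∂ℙ = q := by
      rw [hqdef]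
      exact integral_congr_ae (Filter.Eventually.of_forall fun ω => by
        simp only [neg_mul]; ring)
    have hρ' : ∫ ω, rexp (-(ν * X ω)) ∂ℙ = ρ₁ := by
      rw [hfix]
      exact integral_congr_ae (Filter.Eventually.of_forall fun ω => by
        simp only [neg_mul])
    rw [hq', hρ']
    simp
    ring
  rw [hsplit, hterm1, hterm2, hνdef]
  have hμ' : μ ≠ 0 := hμ.ne'
  have h1ρ' : (1 - ρ₁) ≠ 0 := h1ρ.ne'
  field_simp
  ring
end

section
/- Let μ > 0, ν > 0 and let X be a nonnegative random variable. Let ρ₁ ∈ (0,1) satisfy ρ₁ = E[e^{−μ(1−ρ₁)X}], set q₀ = E[e^{−νX}], and assume ν ≠ μ(1−ρ₁). Let T ~ Exp(μ(1−ρ₁)) and S ~ Exp(μ), with X, T, S mutually independent, and set Y = S + max(X − T, 0). Then E[e^{−νY}] = μ·(μ(1−ρ₁)q₀ − νρ₁) / ((μ+ν)(μ(1−ρ₁) − ν)). -/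
open MeasureTheory ProbabilityTheory Real Set
open scoped ProbabilityTheory ENNReal NNReal

lemma exp_int_Ioi {b : ℝ} (hb : 0 < b) (c : ℝ) :
    ∫ x in Ioi c, Real.exp (-(b * x)) = Real.exp (-(b * c)) / b := by
  have := MeasureTheory.integral_comp_mul_left_Ioi (fun y => Real.exp (-y)) c hb
  simp only [smul_eq_mul] at this
  rw [this, integral_exp_neg_Ioi]
  field_simp

lemma exp_intervalInt {c : ℝ} (hc : c ≠ 0) (x : ℝ) :
    ∫ t in (0:ℝ)..x, Real.exp (c * t) = (Real.exp (c * x) - 1) / c := by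
  have h : ∀ t ∈ Set.uIcc (0:ℝ) x, HasDerivAt (fun t => Real.exp (c * t) / c) (Real.exp (c * t)) t := by
    intro t _
    have : HasDerivAt (fun t => Real.exp (c * t)) (Real.exp (c * t) * c) t :=
      (Real.hasDerivAt_exp (c * t)).comp t (by simpa using (hasDerivAt_id t).const_mul c)
    have := this.div_const c
    simpa [mul_div_assoc, mul_div_cancel_right₀ _ hc] using this
  rw [intervalIntegral.integral_eq_sub_of_hasDerivAt h
    ((Real.continuous_exp.comp (continuous_const.mul continuous_id)).intervalIntegrable 0 x)]
  simp [sub_div]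

lemma expMeasure_integral {r : ℝ} (hr : 0 < r) (g : ℝ → ℝ) (hg : Measurable g) :
    ∫ x, g x ∂(expMeasure r) = ∫ x in Ioi (0:ℝ), r * Real.exp (-(r * x)) * g x := by
  have hd : expMeasure r
      = volume.withDensity (fun x => ((exponentialPDFReal r x).toNNReal : ℝ≥0∞)) := by
    rfl
  rw [hd, integral_withDensity_eq_integral_smul (by measurability) g]
  have h1 : (fun x => (exponentialPDFReal r x).toNNReal • g x)
      = Set.indicator (Ici (0:ℝ)) (fun x => r * Real.exp (-(r * x)) * g x) := by
    funext x
    simp only [NNReal.smul_def, smul_eq_mul]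
    rw [Real.coe_toNNReal _ (exponentialPDFReal_nonneg hr x)]
    by_cases hx : 0 ≤ x
    · rw [Set.indicator_of_mem (Set.mem_Ici.mpr hx)]
      simp [exponentialPDFReal, gammaPDFReal, if_pos hx]
    · rw [Set.indicator_of_notMem (by simpa using hx)]
      simp [exponentialPDFReal, gammaPDFReal, if_neg hx]
  rw [h1, integral_indicator measurableSet_Ici, integral_Ici_eq_integral_Ioi]

lemma exp_laplace {r c : ℝ} (hr : 0 < r) (hc : 0 < c) :
    ∫ x, Real.exp (-(c * x)) ∂(expMeasure r) = r / (r + c) := by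
  rw [expMeasure_integral hr _ (by fun_prop)]
  have h1 : ∀ x : ℝ, r * Real.exp (-(r * x)) * Real.exp (-(c * x))
      = r * Real.exp (-((r + c) * x)) := by
    intro x; rw [mul_assoc, ← Real.exp_add]; ring_nf
  simp_rw [h1]
  rw [integral_const_mul, exp_int_Ioi (by linarith) 0]
  simp
  field_simp

lemma inner_J {α ν x : ℝ} (hα : 0 < α) (hν : 0 < ν) (hne : α ≠ ν) (hx : 0 ≤ x) :
    ∫ t, Real.exp (-ν * max (x - t) 0) ∂(expMeasure α)
      = (α * Real.exp (-(ν * x)) - ν * Real.exp (-(α * x))) / (α - ν) := by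
  rw [expMeasure_integral hα _ (by fun_prop)]
  have hsplit : (Ioi (0:ℝ)) = Ioc 0 x ∪ Ioi x := (Ioc_union_Ioi_eq_Ioi hx).symm
  have hcont : Continuous (fun t : ℝ => α * Real.exp (-(α * t)) * Real.exp (-ν * max (x - t) 0)) := by
    fun_prop
  have hint1 : IntegrableOn (fun t : ℝ => α * Real.exp (-(α * t)) * Real.exp (-ν * max (x - t) 0))
      (Ioc 0 x) := hcont.integrableOn_Ioc
  have hint2 : IntegrableOn (fun t : ℝ => α * Real.exp (-(α * t)) * Real.exp (-ν * max (x - t) 0))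
      (Ioi x) := by
    apply (((exp_neg_integrableOn_Ioi x hα).const_mul α).mono' hcont.aestronglyMeasurable.restrict)
    filter_upwards with t
    rw [norm_mul, norm_mul]
    have h2 : Real.exp (-ν * max (x - t) 0) ≤ 1 := by
      apply Real.exp_le_one_iff.mpr
      have : 0 ≤ max (x - t) 0 := le_max_right _ _
      nlinarith
    calc ‖α‖ * ‖Real.exp (-(α * t))‖ * ‖Real.exp (-ν * max (x - t) 0)‖
        ≤ ‖α‖ * ‖Real.exp (-(α * t))‖ * 1 := by
          apply mul_le_mul_of_nonneg_left _ (by positivity)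
          rw [Real.norm_eq_abs, abs_of_pos (Real.exp_pos _)]; exact h2
      _ = α * Real.exp (-α * t) := by
          rw [neg_mul, Real.norm_eq_abs, Real.norm_eq_abs, abs_of_pos hα,
            abs_of_pos (Real.exp_pos _), mul_one]
  rw [hsplit, setIntegral_union (Ioc_disjoint_Ioi le_rfl) measurableSet_Ioi hint1 hint2]
  have hpart2 : ∫ t in Ioi x, α * Real.exp (-(α * t)) * Real.exp (-ν * max (x - t) 0)
      = Real.exp (-(α * x)) := by
    rw [setIntegral_congr_fun measurableSet_Ioi (g := fun t => α * Real.exp (-(α * t)))]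
    · rw [integral_const_mul, exp_int_Ioi hα x]; field_simp
    · intro t ht
      have : max (x - t) 0 = 0 := max_eq_right (by simp at ht; linarith)
      simp [this]
  have hpart1 : ∫ t in Ioc 0 x, α * Real.exp (-(α * t)) * Real.exp (-ν * max (x - t) 0)
      = α * Real.exp (-(ν * x)) * ((Real.exp ((ν - α) * x) - 1) / (ν - α)) := by
    rw [← intervalIntegral.integral_of_le hx]
    rw [intervalIntegral.integral_congr (g := fun t => α * Real.exp (-(ν * x)) * Real.exp ((ν - α) * t))]
    · rw [intervalIntegral.integral_const_mul, exp_intervalInt (sub_ne_zero.mpr hne.symm) x]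
    · intro t ht
      dsimp only
      rw [Set.uIcc_of_le hx] at ht
      have hm : max (x - t) 0 = x - t := max_eq_left (by linarith [ht.2])
      rw [hm, mul_assoc, mul_assoc, ← Real.exp_add, ← Real.exp_add]
      congr 1
      ring
  rw [hpart1, hpart2]
  have hAB : Real.exp (-(ν * x)) * Real.exp ((ν - α) * x) = Real.exp (-(α * x)) := by
    rw [← Real.exp_add]; ring_nf
  have hνα : ν - α ≠ 0 := sub_ne_zero.mpr (Ne.symm hne)
  have hαν : α - ν ≠ 0 := sub_ne_zero.mpr hne
  field_simp
  rw [mul_comm x (ν - α)]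
  linear_combination (α * (α - ν)) * hAB


/-- Proposition 3: the missing probability `E[exp (-ν Y)]` of an update in a G/M/1/M
update-and-decide system, where `Y = S + max (X - T) 0` is the inter-departure time. -/
theorem missing_probability_GM1M
    {Ω : Type*} [MeasureSpace Ω] [IsProbabilityMeasure (ℙ : Measure Ω)]
    (μ ν ρ₁ : ℝ) (hμ : 0 < μ) (hν : 0 < ν) (hρ : ρ₁ ∈ Set.Ioo (0 : ℝ) 1)
    (hνne : ν ≠ μ * (1 - ρ₁))
    (X T S : Ω → ℝ)
    (hXmeas : Measurable X) (hTmeas : Measurable T) (hSmeas : Measurable S)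
    (hXnonneg : ∀ ω, 0 ≤ X ω)
    (hfix : ρ₁ = ∫ ω, Real.exp (-(μ * (1 - ρ₁)) * X ω) ∂ℙ)
    (hTdist : Measure.map T ℙ = expMeasure (μ * (1 - ρ₁)))
    (hSdist : Measure.map S ℙ = expMeasure μ)
    (hindep : iIndepFun ![X, T, S] ℙ) :
    ∫ ω, Real.exp (-ν * (S ω + max (X ω - T ω) 0)) ∂ℙ
      = μ * (μ * (1 - ρ₁) * (∫ ω, Real.exp (-ν * X ω) ∂ℙ) - ν * ρ₁)
          / ((μ + ν) * (μ * (1 - ρ₁) - ν)) := by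
  obtain ⟨hρ0, hρ1⟩ := hρ
  set α := μ * (1 - ρ₁) with hαdef
  have hα : 0 < α := mul_pos hμ (by linarith)
  have hαν : α ≠ ν := fun h => hνne h.symm
  have hανne : α - ν ≠ 0 := sub_ne_zero.mpr hαν
  have hmeas : ∀ i, Measurable (![X, T, S] i) := by
    intro i; fin_cases i <;> assumption
  haveI hpX : IsProbabilityMeasure (Measure.map X ℙ) :=
    Measure.isProbabilityMeasure_map hXmeas.aemeasurable
  haveI hpT : IsProbabilityMeasure (Measure.map T ℙ) :=
    Measure.isProbabilityMeasure_map hTmeas.aemeasurable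
  have hpair : Measurable (fun ω => (X ω, T ω)) := hXmeas.prodMk hTmeas
  have φmeas : Measurable (fun p : ℝ × ℝ => Real.exp (-ν * max (p.1 - p.2) 0)) := by fun_prop
  have ψmeas : Measurable (fun s : ℝ => Real.exp (-ν * s)) := by fun_prop
  have hIndS : IndepFun (fun ω => (X ω, T ω)) S ℙ :=
    hindep.indepFun_prodMk hmeas 0 1 2 (by decide) (by decide)
  have hIndfg : IndepFun (fun ω => Real.exp (-ν * max (X ω - T ω) 0))
      (fun ω => Real.exp (-ν * S ω)) ℙ := hIndS.comp φmeas ψmeas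
  have hsplit : ∀ ω, Real.exp (-ν * (S ω + max (X ω - T ω) 0))
      = Real.exp (-ν * max (X ω - T ω) 0) * Real.exp (-ν * S ω) := by
    intro ω; rw [← Real.exp_add]; ring_nf
  simp_rw [hsplit]
  have hmul := hIndfg.integral_mul_eq_mul_integral (φmeas.comp hpair).aestronglyMeasurable
    (ψmeas.comp hSmeas).aestronglyMeasurable
  simp only [Pi.mul_apply] at hmul
  rw [hmul]
  have hS : ∫ ω, Real.exp (-ν * S ω) ∂ℙ = μ / (μ + ν) := by
    have h0 : ∫ ω, Real.exp (-ν * S ω) ∂ℙ = ∫ s, Real.exp (-ν * s) ∂(Measure.map S ℙ) :=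
      (integral_map hSmeas.aemeasurable ψmeas.aestronglyMeasurable).symm
    rw [h0, hSdist]
    simp_rw [neg_mul]
    exact exp_laplace hμ hν
  have hae : ∀ᵐ x ∂(Measure.map X ℙ), x ∈ Set.Ici (0:ℝ) := by
    exact (MeasureTheory.ae_map_iff hXmeas.aemeasurable measurableSet_Ici).mpr
      (ae_of_all _ (fun ω => hXnonneg ω))
  have hi1 : Integrable (fun x => Real.exp (-(ν * x))) (Measure.map X ℙ) := by
    apply (integrable_const (1:ℝ)).mono' (Measurable.aestronglyMeasurable (by fun_prop))
    filter_upwards [hae] with x hx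
    rw [Real.norm_eq_abs, abs_of_pos (Real.exp_pos _)]
    exact Real.exp_le_one_iff.mpr (by simp at hx; nlinarith)
  have hi2 : Integrable (fun x => Real.exp (-(α * x))) (Measure.map X ℙ) := by
    apply (integrable_const (1:ℝ)).mono' (Measurable.aestronglyMeasurable (by fun_prop))
    filter_upwards [hae] with x hx
    rw [Real.norm_eq_abs, abs_of_pos (Real.exp_pos _)]
    exact Real.exp_le_one_iff.mpr (by simp at hx; nlinarith)
  have hXT : ∫ ω, Real.exp (-ν * max (X ω - T ω) 0) ∂ℙ
      = (α * (∫ ω, Real.exp (-ν * X ω) ∂ℙ) - ν * ρ₁) / (α - ν) := by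
    have hmap : Measure.map (fun ω => (X ω, T ω)) ℙ
        = (Measure.map X ℙ).prod (Measure.map T ℙ) :=
      (indepFun_iff_map_prod_eq_prod_map_map hXmeas.aemeasurable hTmeas.aemeasurable).mp
        (hindep.indepFun (show (0 : Fin 3) ≠ 1 by decide))
    have h1 : ∫ ω, Real.exp (-ν * max (X ω - T ω) 0) ∂ℙ
        = ∫ p : ℝ × ℝ, Real.exp (-ν * max (p.1 - p.2) 0)
            ∂((Measure.map X ℙ).prod (Measure.map T ℙ)) := by
      rw [← hmap,
        integral_map hpair.aemeasurable φmeas.aestronglyMeasurable]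
    rw [h1]
    have hintφ : Integrable (fun p : ℝ × ℝ => Real.exp (-ν * max (p.1 - p.2) 0))
        ((Measure.map X ℙ).prod (Measure.map T ℙ)) := by
      apply (integrable_const (1:ℝ)).mono' φmeas.aestronglyMeasurable
      filter_upwards with p
      rw [Real.norm_eq_abs, abs_of_pos (Real.exp_pos _)]
      exact Real.exp_le_one_iff.mpr (by nlinarith [le_max_right (p.1 - p.2) (0:ℝ)])
    rw [MeasureTheory.integral_prod _ hintφ, hTdist]
    have h2 : ∫ x, (∫ t, Real.exp (-ν * max (x - t) 0) ∂(expMeasure α)) ∂(Measure.map X ℙ)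
        = ∫ x, (α * Real.exp (-(ν * x)) - ν * Real.exp (-(α * x))) / (α - ν)
            ∂(Measure.map X ℙ) := by
      apply integral_congr_ae
      filter_upwards [hae] with x hx
      exact inner_J hα hν hαν hx
    rw [h2, integral_div, integral_sub (hi1.const_mul α) (hi2.const_mul ν),
      integral_const_mul, integral_const_mul]
    have e1 : ∫ x, Real.exp (-(ν * x)) ∂(Measure.map X ℙ)
        = ∫ ω, Real.exp (-ν * X ω) ∂ℙ := by
      rw [integral_map hXmeas.aemeasurable (Measurable.aestronglyMeasurable (by fun_prop))]
      simp_rw [neg_mul]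
    have e2 : ∫ x, Real.exp (-(α * x)) ∂(Measure.map X ℙ) = ρ₁ := by
      rw [integral_map hXmeas.aemeasurable (Measurable.aestronglyMeasurable (by fun_prop)), hfix]
      simp_rw [neg_mul]
    rw [e1, e2]
  rw [hS, hXT]
  have hμν : μ + ν ≠ 0 := by positivity
  field_simp
end

section
/- Let 0 < λ < μ and ν > 0. Let X ~ Exp(λ), T ~ Exp(μ−λ) and S ~ Exp(μ) be mutually independent, and set Y = S + max(X − T, 0). Then E[e^{−νY}] = λ/(λ+ν). -/
open MeasureTheory ProbabilityTheory Set
open scoped ProbabilityTheory NNReal ENNReal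

namespace MM1Maux

lemma exp_Ioi {c : ℝ} (hc : 0 < c) (t : ℝ) :
    ∫ x in Set.Ioi t, Real.exp (-(c * x)) = Real.exp (-(c * t)) / c := by
  have h := MeasureTheory.integral_comp_mul_left_Ioi (fun x => Real.exp (-x)) t hc
  simp only [smul_eq_mul] at h
  rw [h, integral_exp_neg_Ioi, div_eq_inv_mul]

lemma pdfReal_eq (r x : ℝ) :
    exponentialPDFReal r x = if 0 ≤ x then r * Real.exp (-(r * x)) else 0 := by
  rw [exponentialPDFReal, gammaPDFReal]
  simp only [Real.rpow_one, Real.Gamma_one, div_one, sub_self, Real.rpow_zero, mul_one]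

lemma integral_expMeasure {r : ℝ} (hr : 0 < r) {f : ℝ → ℝ} (hf : Measurable f) :
    ∫ x, f x ∂(expMeasure r) = ∫ x in Set.Ioi 0, f x * (r * Real.exp (-(r * x))) := by
  have hd : expMeasure r
      = volume.withDensity (fun x => ((Real.toNNReal (exponentialPDFReal r x) : ℝ≥0) : ℝ≥0∞)) :=
    rfl
  have hmeas : Measurable fun x => (exponentialPDFReal r x).toNNReal :=
    measurable_real_toNNReal.comp (measurable_exponentialPDFReal r)
  rw [hd, integral_withDensity_eq_integral_smul hmeas f]
  have h1 : (fun x => Real.toNNReal (exponentialPDFReal r x) • f x)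
      = fun x => exponentialPDFReal r x * f x := by
    funext x
    rw [NNReal.smul_def, Real.coe_toNNReal _ (exponentialPDFReal_nonneg hr x), smul_eq_mul]
  rw [h1]
  have h0 : ∀ x ∉ Set.Ici (0:ℝ), exponentialPDFReal r x * f x = 0 := by
    intro x hx
    rw [pdfReal_eq, if_neg (by simpa using hx), zero_mul]
  rw [← setIntegral_eq_integral_of_forall_compl_eq_zero h0, integral_Ici_eq_integral_Ioi]
  refine setIntegral_congr_fun measurableSet_Ioi fun x hx => ?_
  rw [pdfReal_eq, if_pos (le_of_lt hx)]
  ring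

lemma ae_nonneg {r : ℝ} : ∀ᵐ x ∂(expMeasure r), 0 ≤ x := by
  rw [ae_iff]
  have h : {x : ℝ | ¬ 0 ≤ x} = Set.Iio 0 := by ext x; simp
  rw [h]
  show (volume.withDensity (gammaPDF 1 r)) (Set.Iio 0) = 0
  rw [withDensity_apply _ measurableSet_Iio]
  exact lintegral_gammaPDF_of_nonpos le_rfl

lemma laplace {r b : ℝ} (hr : 0 < r) (hb : 0 < b) :
    ∫ x, Real.exp (-(b * x)) ∂(expMeasure r) = r / (r + b) := by
  have hrb : 0 < r + b := by linarith
  have hm : Measurable fun x : ℝ => Real.exp (-(b * x)) := by fun_prop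
  rw [integral_expMeasure hr hm]
  have h1 : ∀ x ∈ Set.Ioi (0:ℝ),
      Real.exp (-(b * x)) * (r * Real.exp (-(r * x))) = r * Real.exp (-((r + b) * x)) := by
    intro x _
    rw [show -((r + b) * x) = -(b * x) + -(r * x) by ring, Real.exp_add]
    ring
  rw [setIntegral_congr_fun measurableSet_Ioi h1, integral_const_mul, exp_Ioi hrb 0]
  simp [div_eq_mul_inv]

lemma integrable_exp {r b : ℝ} (hr : 0 < r) (hb : 0 ≤ b) :
    Integrable (fun x => Real.exp (-(b * x))) (expMeasure r) := by
  haveI := isProbabilityMeasure_expMeasure hr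
  refine Integrable.mono' (integrable_const 1) (Measurable.aestronglyMeasurable (by fun_prop)) ?_
  filter_upwards [ae_nonneg (r := r)] with x hx
  rw [Real.norm_eq_abs, abs_of_pos (Real.exp_pos _)]
  exact Real.exp_le_one_iff.2 (by nlinarith)

lemma inner_int {lam ν : ℝ} (hl : 0 < lam) (hν : 0 < ν) {t : ℝ} (ht : 0 ≤ t) :
    ∫ x, Real.exp (-ν * max (x - t) 0) ∂(expMeasure lam)
      = 1 - ν / (lam + ν) * Real.exp (-(lam * t)) := by
  have hlv : 0 < lam + ν := by linarith
  have hmeas : Measurable fun x : ℝ => Real.exp (-ν * max (x - t) 0) := by fun_prop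
  rw [integral_expMeasure hl hmeas]
  set F := fun x : ℝ => Real.exp (-ν * max (x - t) 0) * (lam * Real.exp (-(lam * x))) with hF
  have hFm : Measurable F := by fun_prop
  have hF1 : ∀ x, 0 ≤ x → ‖F x‖ ≤ lam := by
    intro x hx
    simp only [hF]
    have e1 : Real.exp (-ν * max (x - t) 0) ≤ 1 :=
      Real.exp_le_one_iff.2 (by nlinarith [le_max_right (x - t) (0:ℝ)])
    have e2 : Real.exp (-(lam * x)) ≤ 1 := Real.exp_le_one_iff.2 (by nlinarith)
    rw [Real.norm_eq_abs, abs_of_pos (by positivity)]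
    nlinarith [mul_nonneg (sub_nonneg.2 e1) (mul_nonneg hl.le (Real.exp_pos (-(lam*x))).le),
      mul_nonneg hl.le (sub_nonneg.2 e2)]
  have hI1 : IntegrableOn F (Set.Ioc 0 t) := by
    refine Measure.integrableOn_of_bounded (M := lam) (by simp) hFm.aestronglyMeasurable ?_
    refine (ae_restrict_iff' measurableSet_Ioc).2 (ae_of_all _ fun x hx => hF1 x hx.1.le)
  have hI2 : IntegrableOn F (Set.Ioi t) := by
    have hmaj : IntegrableOn (fun x => lam * Real.exp (-(lam * x))) (Set.Ioi t) := by
      simpa [neg_mul, IntegrableOn] using (exp_neg_integrableOn_Ioi t hl).const_mul lam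
    refine Integrable.mono' hmaj hFm.aestronglyMeasurable (ae_of_all _ fun x => ?_)
    simp only [hF]
    rw [Real.norm_eq_abs, abs_of_pos (by positivity)]
    have e1 : Real.exp (-ν * max (x - t) 0) ≤ 1 :=
      Real.exp_le_one_iff.2 (by nlinarith [le_max_right (x - t) (0:ℝ)])
    nlinarith [mul_nonneg (sub_nonneg.2 e1) (mul_nonneg hl.le (Real.exp_pos (-(lam*x))).le)]
  rw [← Set.Ioc_union_Ioi_eq_Ioi ht,
    setIntegral_union (Set.Ioc_disjoint_Ioi le_rfl) measurableSet_Ioi hI1 hI2]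
  have hP1 : ∫ x in Set.Ioc 0 t, F x = 1 - Real.exp (-(lam * t)) := by
    have hcg : ∀ x ∈ Set.Ioc (0:ℝ) t, F x = lam * Real.exp (-(lam * x)) := by
      intro x hx
      simp only [hF]
      rw [max_eq_right (sub_nonpos.2 hx.2), mul_zero, Real.exp_zero, one_mul]
    rw [setIntegral_congr_fun measurableSet_Ioc hcg, ← intervalIntegral.integral_of_le ht]
    rw [intervalIntegral.integral_eq_sub_of_hasDerivAt
      (fun x _ => hasDerivAt_neg_exp_mul_exp (r := lam) (x := x))
      (Continuous.intervalIntegrable (by fun_prop) 0 t)]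
    simp only [mul_zero, neg_zero, Real.exp_zero]
    ring
  have hP2 : ∫ x in Set.Ioi t, F x = lam / (lam + ν) * Real.exp (-(lam * t)) := by
    have hcg : ∀ x ∈ Set.Ioi t, F x
        = lam * Real.exp (ν * t) * Real.exp (-((lam + ν) * x)) := by
      intro x hx
      simp only [hF]
      rw [max_eq_left (sub_nonneg.2 (le_of_lt hx)), mul_left_comm, ← Real.exp_add,
        mul_assoc, ← Real.exp_add]
      congr 1
      ring
    rw [setIntegral_congr_fun measurableSet_Ioi hcg, integral_const_mul, exp_Ioi hlv t]
    have h1 : Real.exp (ν * t) * Real.exp (-(ν * t)) = 1 := by rw [← Real.exp_add]; simp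
    rw [show -((lam + ν) * t) = -(lam * t) + -(ν * t) by ring, Real.exp_add]
    linear_combination (lam * Real.exp (-(lam * t)) / (lam + ν)) * h1
  rw [hP1, hP2]
  field_simp
  ring

end MM1Maux

/-- Missing probability of the M/M/1/M update-and-decide system:
`E[e^{-ν Y}] = λ/(λ+ν)`, where `X ~ Exp(λ)`, `T ~ Exp(μ-λ)`, `S ~ Exp(μ)` are
independent and `Y = S + max (X - T) 0`. -/
theorem missing_probability_MM1M
    {Ω : Type*} [MeasureSpace Ω] [IsProbabilityMeasure (ℙ : Measure Ω)]
    (lam μ ν : ℝ) (h0 : 0 < lam) (h1 : lam < μ) (hν : 0 < ν)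
    (X T S : Ω → ℝ)
    (hXmeas : Measurable X) (hTmeas : Measurable T) (hSmeas : Measurable S)
    (hXdist : Measure.map X ℙ = expMeasure lam)
    (hTdist : Measure.map T ℙ = expMeasure (μ - lam))
    (hSdist : Measure.map S ℙ = expMeasure μ)
    (hindep : iIndepFun ![X, T, S] ℙ) :
    ∫ ω, Real.exp (-ν * (S ω + max (X ω - T ω) 0)) ∂ℙ = lam / (lam + ν) := by
  have h2 : (0:ℝ) < μ - lam := by linarith
  have hμ : (0:ℝ) < μ := by linarith
  have hlv : (0:ℝ) < lam + ν := by linarith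
  haveI := isProbabilityMeasure_expMeasure h0
  haveI := isProbabilityMeasure_expMeasure h2
  set φ : ℝ × ℝ → ℝ := fun p => Real.exp (-ν * max (p.2 - p.1) 0) with hφdef
  set ψ : ℝ → ℝ := fun s => Real.exp (-(ν * s)) with hψdef
  have hφ : Measurable φ := by fun_prop
  have hψ : Measurable ψ := by fun_prop
  have hm : ∀ i, Measurable (![X, T, S] i) := by
    intro i; fin_cases i <;> assumption
  -- Step A: split integrand as a product
  have hrw : (fun ω => Real.exp (-ν * (S ω + max (X ω - T ω) 0)))
      = fun ω => φ (T ω, X ω) * ψ (S ω) := by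
    funext ω
    rw [hφdef, hψdef]
    simp only
    rw [← Real.exp_add]
    congr 1
    ring
  rw [hrw]
  -- Step B: independence
  have hpair : IndepFun (fun ω => (T ω, X ω)) S ℙ := by
    have := hindep.indepFun_prodMk hm 1 0 2 (by decide) (by decide)
    simpa using this
  have hIF : IndepFun (fun ω => φ (T ω, X ω)) (fun ω => ψ (S ω)) ℙ :=
    hpair.comp hφ hψ
  have hmul := hIF.integral_fun_mul_eq_mul_integral
    ((hφ.comp (hTmeas.prodMk hXmeas)).aestronglyMeasurable)
    ((hψ.comp hSmeas).aestronglyMeasurable)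
  rw [hmul]
  -- Step C: E[exp(-νS)]
  have hC : ∫ ω, ψ (S ω) ∂ℙ = μ / (μ + ν) := by
    rw [← integral_map hSmeas.aemeasurable (hψ.aestronglyMeasurable), hSdist]
    exact MM1Maux.laplace hμ hν
  -- Step D,E,F,G: E[φ(T,X)]
  have hTX : IndepFun T X ℙ := hindep.indepFun (i := 1) (j := 0) (by decide)
  have hmap : Measure.map (fun ω => (T ω, X ω)) ℙ
      = (expMeasure (μ - lam)).prod (expMeasure lam) := by
    rw [(indepFun_iff_map_prod_eq_prod_map_map hTmeas.aemeasurable hXmeas.aemeasurable).1 hTX,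
      hTdist, hXdist]
  have hD : ∫ ω, φ (T ω, X ω) ∂ℙ
      = ∫ p, φ p ∂((expMeasure (μ - lam)).prod (expMeasure lam)) := by
    rw [← integral_map (hTmeas.prodMk hXmeas).aemeasurable hφ.aestronglyMeasurable, hmap]
  have hint : Integrable φ ((expMeasure (μ - lam)).prod (expMeasure lam)) := by
    refine Integrable.mono' (integrable_const 1) hφ.aestronglyMeasurable
      (ae_of_all _ fun p => ?_)
    rw [hφdef, Real.norm_eq_abs, abs_of_pos (Real.exp_pos _)]
    exact Real.exp_le_one_iff.2 (by nlinarith [le_max_right (p.2 - p.1) (0:ℝ)])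
  have hE : ∫ p, φ p ∂((expMeasure (μ - lam)).prod (expMeasure lam))
      = ∫ t, (∫ x, Real.exp (-ν * max (x - t) 0) ∂(expMeasure lam)) ∂(expMeasure (μ - lam)) :=
    MeasureTheory.integral_prod φ hint
  have hF : ∫ t, (∫ x, Real.exp (-ν * max (x - t) 0) ∂(expMeasure lam)) ∂(expMeasure (μ - lam))
      = ∫ t, (1 - ν / (lam + ν) * Real.exp (-(lam * t))) ∂(expMeasure (μ - lam)) := by
    refine integral_congr_ae ?_
    filter_upwards [MM1Maux.ae_nonneg (r := μ - lam)] with t ht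
    exact MM1Maux.inner_int h0 hν ht
  have hG : ∫ t, (1 - ν / (lam + ν) * Real.exp (-(lam * t))) ∂(expMeasure (μ - lam))
      = 1 - ν / (lam + ν) * ((μ - lam) / ((μ - lam) + lam)) := by
    rw [integral_sub (integrable_const 1)
      ((MM1Maux.integrable_exp h2 h0.le).const_mul (ν / (lam + ν))),
      integral_const_mul, MM1Maux.laplace h2 h0]
    simp
  rw [hC, hD, hE, hF, hG]
  have hμν : (0:ℝ) < μ + ν := by linarith
  field_simp
  ring
end

section
/- Let 0 < λ < μ, let ρ₁ ∈ (0,1) satisfy ρ₁ = e^{−μ(1−ρ₁)/λ}, let m₀ ≥ 1 be an integer, and set ν = m₀λ and w₁ = e^{−μ(1−ρ₁)/ν}. Let T ~ Exp(μ(1−ρ₁)) and S ~ Exp(μ) be independent. Then E[ ∑_{j=1}^{∞} (j/ν)·1{ T < j/ν ≤ max(T, 1/λ) + S } ] = m₀·( (1+m₀)/(2ν) + w₁/(ν(1−w₁)) ). -/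
open MeasureTheory ProbabilityTheory
open scoped ProbabilityTheory Classical ENNReal NNReal

section Helpers
open Real Set intervalIntegral

lemma expMeasure_Iic {r : ℝ} (hr : 0 < r) (a : ℝ) :
    expMeasure r (Set.Iic a)
      = ENNReal.ofReal (if 0 ≤ a then 1 - Real.exp (-(r * a)) else 0) := by
  have hpdf : gammaPDF 1 r = exponentialPDF r := rfl
  rw [expMeasure, gammaMeasure, withDensity_apply _ measurableSet_Iic, hpdf,
    lintegral_exponentialPDF_eq_antiDeriv hr]

lemma expMeasure_Ici {r : ℝ} (hr : 0 < r) (a : ℝ) :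
    expMeasure r (Set.Ici a) = ENNReal.ofReal (Real.exp (-(r * max a 0))) := by
  haveI := isProbabilityMeasure_expMeasure hr
  have hsing : expMeasure r {a} = 0 := by
    rw [expMeasure, gammaMeasure, withDensity_apply _ (measurableSet_singleton a)]
    exact setLIntegral_measure_zero _ _ (volume_singleton)
  have hIio : expMeasure r (Set.Iio a) = expMeasure r (Set.Iic a) := by
    refine le_antisymm (measure_mono Set.Iio_subset_Iic_self) ?_
    calc expMeasure r (Set.Iic a) = expMeasure r (Set.Iio a ∪ {a}) := by
          rw [Set.Iio_union_right]
      _ ≤ expMeasure r (Set.Iio a) + expMeasure r {a} := measure_union_le _ _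
      _ = expMeasure r (Set.Iio a) := by rw [hsing, add_zero]
  have hcompl : expMeasure r (Set.Ici a) = 1 - expMeasure r (Set.Iio a) := by
    rw [← Set.compl_Iio, measure_compl measurableSet_Iio (measure_ne_top _ _), measure_univ]
  rw [hcompl, hIio, expMeasure_Iic hr]
  by_cases h : 0 ≤ a
  · rw [if_pos h, max_eq_left h]
    have hx0 : (0:ℝ) ≤ Real.exp (-(r * a)) := (Real.exp_pos _).le
    have hx1 : Real.exp (-(r * a)) ≤ 1 := by
      apply Real.exp_le_one_iff.mpr; nlinarith
    rw [ENNReal.ofReal_sub _ hx0, ENNReal.ofReal_one]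
    exact ENNReal.sub_sub_cancel ENNReal.one_ne_top (ENNReal.ofReal_le_one.mpr hx1)
  · rw [if_neg h, max_eq_right (le_of_not_ge h)]
    simp


lemma int_exp_rate {α : ℝ} (a b : ℝ) :
    ∫ t in a..b, α * Real.exp (-(α * t))
      = Real.exp (-(α * a)) - Real.exp (-(α * b)) := by
  have h : ∀ t ∈ Set.uIcc a b, HasDerivAt (fun u => -Real.exp (-(α * u)))
      (α * Real.exp (-(α * t))) t := fun t _ => hasDerivAt_neg_exp_mul_exp
  have hi : IntervalIntegrable (fun t => α * Real.exp (-(α * t))) volume a b := by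
    apply Continuous.intervalIntegrable; fun_prop
  rw [intervalIntegral.integral_eq_sub_of_hasDerivAt h hi]
  ring

lemma int_exp_lin {b : ℝ} (hb : b ≠ 0) (a₁ a₂ : ℝ) :
    ∫ t in a₁..a₂, Real.exp (b * t)
      = (Real.exp (b * a₂) - Real.exp (b * a₁)) / b := by
  have h : ∀ t ∈ Set.uIcc a₁ a₂, HasDerivAt (fun u => Real.exp (b * u) / b)
      (Real.exp (b * t)) t := by
    intro t _
    have h1 : HasDerivAt (fun u : ℝ => b * u) b t := by simpa using (hasDerivAt_id t).const_mul b
    have h2 := (h1.exp).div_const b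
    convert h2 using 1
    · rfl
    · rfl
    · rw [mul_div_assoc, div_self hb, mul_one]
  have hi : IntervalIntegrable (fun t => Real.exp (b * t)) volume a₁ a₂ := by
    apply Continuous.intervalIntegrable; fun_prop
  rw [intervalIntegral.integral_eq_sub_of_hasDerivAt h hi]
  ring

lemma real_integral_core {α μ c τ : ℝ} (hα : 0 < α) (hαμ : α < μ) (hc : 0 < c) (hτ : 0 < τ)
    (hrel : Real.exp (-(α * c)) = 1 - α / μ) :
    (∫ t in Set.Ico 0 τ, α * Real.exp (-(α * t)) * Real.exp (-(μ * max (τ - max t c) 0)))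
      = Real.exp (-(α * max (τ - c) 0)) - Real.exp (-(α * τ)) := by
  have hμ : 0 < μ := hα.trans hαμ
  rw [MeasureTheory.integral_Ico_eq_integral_Ioo, ← MeasureTheory.integral_Ioc_eq_integral_Ioo, ← intervalIntegral.integral_of_le hτ.le]
  by_cases hcase : τ ≤ c
  · have hmax : max (τ - c) 0 = 0 := max_eq_right (by linarith)
    rw [hmax, mul_zero, neg_zero, Real.exp_zero]
    have hcg : Set.EqOn (fun t => α * Real.exp (-(α * t)) * Real.exp (-(μ * max (τ - max t c) 0)))
        (fun t => α * Real.exp (-(α * t))) (Set.uIcc 0 τ) := by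
      intro t ht
      rw [Set.uIcc_of_le hτ.le] at ht
      have h1 : max t c = c := max_eq_right (le_trans ht.2 hcase)
      have h2 : max (τ - c) 0 = 0 := max_eq_right (by linarith)
      simp only [h1, h2, mul_zero, neg_zero, Real.exp_zero, mul_one]
    rw [intervalIntegral.integral_congr hcg, int_exp_rate, mul_zero, neg_zero, Real.exp_zero]
  · push_neg at hcase
    have hmax : max (τ - c) 0 = τ - c := max_eq_left (by linarith)
    rw [hmax]
    have hint : ∀ a b : ℝ, IntervalIntegrable
        (fun t => α * Real.exp (-(α * t)) * Real.exp (-(μ * max (τ - max t c) 0))) volume a b := by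
      intro a b
      apply Continuous.intervalIntegrable
      fun_prop
    rw [← intervalIntegral.integral_add_adjacent_intervals (b := c) (hint 0 c) (hint c τ)]
    have hcg1 : Set.EqOn (fun t => α * Real.exp (-(α * t)) * Real.exp (-(μ * max (τ - max t c) 0)))
        (fun t => α * Real.exp (-(α * t)) * Real.exp (-(μ * (τ - c)))) (Set.uIcc 0 c) := by
      intro t ht
      rw [Set.uIcc_of_le hc.le] at ht
      have h1 : max t c = c := max_eq_right ht.2
      have h2 : max (τ - c) 0 = τ - c := hmax
      simp only [h1, h2]
    have hcg2 : Set.EqOn (fun t => α * Real.exp (-(α * t)) * Real.exp (-(μ * max (τ - max t c) 0)))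
        (fun t => (α * Real.exp (-(μ * τ))) * Real.exp ((μ - α) * t)) (Set.uIcc c τ) := by
      intro t ht
      rw [Set.uIcc_of_le hcase.le] at ht
      have h1 : max t c = t := max_eq_left ht.1
      have h2 : max (τ - t) 0 = τ - t := max_eq_left (by linarith [ht.2])
      simp only [h1, h2]
      rw [mul_assoc, mul_assoc, ← Real.exp_add, ← Real.exp_add]
      ring_nf
    have I1 : (∫ x in (0:ℝ)..c, α * Real.exp (-(α * x)) * Real.exp (-(μ * (τ - c))))
        = (1 - Real.exp (-(α * c))) * Real.exp (-(μ * (τ - c))) := by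
      rw [intervalIntegral.integral_mul_const, int_exp_rate, mul_zero, neg_zero, Real.exp_zero]
    have I2 : (∫ x in c..τ, α * Real.exp (-(μ * τ)) * Real.exp ((μ - α) * x))
        = α * Real.exp (-(μ * τ))
          * ((Real.exp ((μ - α) * τ) - Real.exp ((μ - α) * c)) / (μ - α)) := by
      rw [intervalIntegral.integral_const_mul,
        int_exp_lin (ne_of_gt (by linarith : (0:ℝ) < μ - α))]
    rw [intervalIntegral.integral_congr hcg1, intervalIntegral.integral_congr hcg2, I1, I2]
    -- pure algebra now
    have e2 : Real.exp (-(μ * τ)) * Real.exp ((μ - α) * τ) = Real.exp (-(α * τ)) := by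
      rw [← Real.exp_add]; ring_nf
    have e3 : Real.exp (-(μ * τ)) * Real.exp ((μ - α) * c)
        = Real.exp (-(α * c)) * Real.exp (-(μ * (τ - c))) := by
      rw [← Real.exp_add, ← Real.exp_add]; ring_nf
    have e1 : Real.exp (-(α * (τ - c))) * Real.exp (-(α * c)) = Real.exp (-(α * τ)) := by
      rw [← Real.exp_add]; ring_nf
    have key : α * Real.exp (-(μ * τ))
          * ((Real.exp ((μ - α) * τ) - Real.exp ((μ - α) * c)) / (μ - α))
        = α * ((Real.exp (-(α * τ)) - Real.exp (-(α * c)) * Real.exp (-(μ * (τ - c)))) / (μ - α)) := by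
      rw [mul_assoc]
      congr 1
      rw [← mul_div_assoc, mul_sub, e2, e3]
    rw [key, ← e1]
    set r := Real.exp (-(α * c)) with hrdef
    set E := Real.exp (-(μ * (τ - c))) with hEdef
    set Y := Real.exp (-(α * (τ - c))) with hYdef
    have hrpos : 0 < r := Real.exp_pos _
    have hαμ' : α / μ = 1 - r := by rw [hrel]; ring
    have hμα : μ - α = μ * r := by rw [hrel]; field_simp
    have hstep : α * ((Y * r - r * E) / (μ * r)) = (α / μ) * (Y - E) := by
      field_simp
    rw [hμα, hstep, hαμ']
    ring

lemma prob_core {α μ c τ : ℝ} (hα : 0 < α) (hαμ : α < μ) (hc : 0 < c) (hτ : 0 < τ)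
    (hrel : Real.exp (-(α * c)) = 1 - α / μ) :
    ((expMeasure α).prod (expMeasure μ)) {p : ℝ × ℝ | p.1 < τ ∧ τ ≤ max p.1 c + p.2}
      = ENNReal.ofReal (Real.exp (-(α * max (τ - c) 0)) - Real.exp (-(α * τ))) := by
  have hμ : 0 < μ := hα.trans hαμ
  haveI := isProbabilityMeasure_expMeasure hα
  haveI := isProbabilityMeasure_expMeasure hμ
  have hB : MeasurableSet {p : ℝ × ℝ | p.1 < τ ∧ τ ≤ max p.1 c + p.2} := by
    have : {p : ℝ × ℝ | p.1 < τ ∧ τ ≤ max p.1 c + p.2}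
        = {p : ℝ × ℝ | p.1 < τ} ∩ {p : ℝ × ℝ | τ ≤ max p.1 c + p.2} := rfl
    rw [this]
    exact (measurableSet_lt measurable_fst measurable_const).inter
      (measurableSet_le measurable_const
        ((measurable_fst.max measurable_const).add measurable_snd))
  rw [Measure.prod_apply hB]
  have hslice : ∀ t : ℝ, expMeasure μ (Prod.mk t ⁻¹' {p : ℝ × ℝ | p.1 < τ ∧ τ ≤ max p.1 c + p.2})
      = Set.indicator (Set.Iio τ)
          (fun t => ENNReal.ofReal (Real.exp (-(μ * max (τ - max t c) 0)))) t := by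
    intro t
    by_cases ht : t < τ
    · rw [Set.indicator_of_mem (Set.mem_Iio.mpr ht)]
      have hpre : Prod.mk t ⁻¹' {p : ℝ × ℝ | p.1 < τ ∧ τ ≤ max p.1 c + p.2}
          = Set.Ici (τ - max t c) := by
        ext s
        simp only [Set.mem_preimage, Set.mem_setOf_eq, Set.mem_Ici, ht, true_and]
        constructor
        · intro h; linarith
        · intro h; linarith
      rw [hpre, expMeasure_Ici hμ]
    · rw [Set.indicator_of_notMem (by simpa using ht)]
      have hpre : Prod.mk t ⁻¹' {p : ℝ × ℝ | p.1 < τ ∧ τ ≤ max p.1 c + p.2} = ∅ := by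
        ext s; simp [ht]
      rw [hpre, measure_empty]
  rw [lintegral_congr hslice]
  have hmeas_fn : Measurable fun t : ℝ => ENNReal.ofReal (Real.exp (-(μ * max (τ - max t c) 0))) := by
    apply Measurable.ennreal_ofReal
    fun_prop
  have hmeas_g : Measurable (Set.indicator (Set.Iio τ)
      (fun t => ENNReal.ofReal (Real.exp (-(μ * max (τ - max t c) 0))))) :=
    hmeas_fn.indicator measurableSet_Iio
  have hpdfmeas : Measurable (exponentialPDF α) :=
    (measurable_exponentialPDFReal α).ennreal_ofReal
  rw [show expMeasure α = volume.withDensity (exponentialPDF α) from rfl,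
    lintegral_withDensity_eq_lintegral_mul _ hpdfmeas hmeas_g]
  have hsplit : (∫⁻ t, (exponentialPDF α * Set.indicator (Set.Iio τ)
        (fun t => ENNReal.ofReal (Real.exp (-(μ * max (τ - max t c) 0))))) t)
      = ∫⁻ t in Set.Ico 0 τ,
          ENNReal.ofReal (α * Real.exp (-(α * t)) * Real.exp (-(μ * max (τ - max t c) 0))) := by
    rw [← lintegral_indicator measurableSet_Ico]
    apply lintegral_congr
    intro t
    simp only [Pi.mul_apply]
    by_cases h1 : t ∈ Set.Ico 0 τ
    · rw [Set.indicator_of_mem h1, Set.indicator_of_mem (Set.mem_Iio.mpr h1.2),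
        exponentialPDF_of_nonneg h1.1, ← ENNReal.ofReal_mul (by positivity)]
    · rw [Set.indicator_of_notMem h1]
      rcases not_and_or.mp h1 with h2 | h2
      · push_neg at h2
        rw [exponentialPDF_of_neg h2, zero_mul]
      · push_neg at h2
        rw [Set.indicator_of_notMem (by simpa using h2), mul_zero]
  rw [hsplit]
  have hcont : Continuous fun t : ℝ =>
      α * Real.exp (-(α * t)) * Real.exp (-(μ * max (τ - max t c) 0)) := by fun_prop
  have hInt : IntegrableOn (fun t : ℝ =>
      α * Real.exp (-(α * t)) * Real.exp (-(μ * max (τ - max t c) 0))) (Set.Ico 0 τ) := by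
    exact (hcont.integrableOn_Icc (a := 0) (b := τ)).mono_set Set.Ico_subset_Icc_self
  rw [← ofReal_integral_eq_lintegral_ofReal hInt (ae_of_all _ (fun t => by positivity)),
    real_integral_core hα hαμ hc hτ hrel]


lemma gauss_aux : ∀ n : ℕ, (∑ j ∈ Finset.range n, ((j:ℝ)+1)) = (n:ℝ) * ((n:ℝ)+1) / 2 := by
  intro n
  induction n with
  | zero => simp
  | succ k ih => rw [Finset.sum_range_succ, ih]; push_cast; ring

lemma series_core {w : ℝ} (hw0 : 0 < w) (hw1 : w < 1) (m₀ : ℕ) (hm : 1 ≤ m₀) :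
    (∑' j : ℕ, (((j:ℝ) + 1) * (w ^ (j + 1 - m₀) - w ^ (j + 1))))
      = (m₀:ℝ) * ((m₀:ℝ) + 1) / 2 + (m₀:ℝ) * w / (1 - w) := by
  have hwn : ‖w‖ < 1 := by rw [Real.norm_eq_abs, abs_of_pos hw0]; exact hw1
  have h1w : (0:ℝ) < 1 - w := by linarith
  have hs0 : Summable (fun n : ℕ => w ^ n) := summable_geometric_of_lt_one hw0.le hw1
  have hs0' : Summable (fun n : ℕ => w ^ (n+1)) := (summable_nat_add_iff 1).mpr hs0
  have hs1 : Summable (fun n : ℕ => (n:ℝ) * w ^ n) := by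
    simpa using summable_pow_mul_geometric_of_norm_lt_one 1 hwn
  have hveq : (fun j : ℕ => ((j:ℝ)+1) * w ^ (j+1))
      = fun j : ℕ => w * ((j:ℝ) * w ^ j) + w * w ^ j := by
    funext j; rw [pow_succ]; ring
  have hv : Summable (fun j : ℕ => ((j:ℝ)+1) * w ^ (j+1)) := by
    rw [hveq]; exact (hs1.mul_left w).add (hs0.mul_left w)
  have hueq : (fun i : ℕ => (((i + m₀ : ℕ):ℝ)+1) * w ^ ((i + m₀) + 1 - m₀))
      = fun i : ℕ => ((i:ℝ)+1) * w ^ (i+1) + (m₀:ℝ) * w ^ (i+1) := by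
    funext i
    have h2 : (i + m₀) + 1 - m₀ = i + 1 := by omega
    rw [h2]; push_cast; ring
  have hu : Summable (fun j : ℕ => ((j:ℝ)+1) * w ^ (j + 1 - m₀)) := by
    apply (summable_nat_add_iff m₀).mp
    rw [hueq]
    exact hv.add (hs0'.mul_left _)
  have hgeo : (∑' i : ℕ, w ^ (i+1)) = w / (1 - w) := by
    have : (fun i : ℕ => w ^ (i+1)) = fun i => w * w ^ i := by
      funext i; rw [pow_succ]; ring
    rw [this, tsum_mul_left, tsum_geometric_of_lt_one hw0.le hw1]
    rw [div_eq_mul_inv]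
  have htail : (∑' i : ℕ, (((i + m₀ : ℕ):ℝ)+1) * w ^ ((i + m₀) + 1 - m₀))
      = (∑' j : ℕ, ((j:ℝ)+1) * w ^ (j+1)) + (m₀:ℝ) * (w / (1 - w)) := by
    rw [hueq, Summable.tsum_add hv (hs0'.mul_left _), tsum_mul_left, hgeo]
  have hhead : (∑ j ∈ Finset.range m₀, ((j:ℝ)+1) * w ^ (j + 1 - m₀))
      = (m₀:ℝ) * ((m₀:ℝ)+1) / 2 := by
    rw [← gauss_aux m₀]
    apply Finset.sum_congr rfl
    intro j hj
    have : j + 1 - m₀ = 0 := by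
      have := Finset.mem_range.mp hj; omega
    rw [this, pow_zero, mul_one]
  rw [tsum_congr (fun j : ℕ => mul_sub ((j:ℝ)+1) (w ^ (j + 1 - m₀)) (w ^ (j+1))),
    Summable.tsum_sub hu hv, ← Summable.sum_add_tsum_nat_add m₀ hu, hhead, htail]
  ring

lemma summable_series_core {w : ℝ} (hw0 : 0 < w) (hw1 : w < 1) (m₀ : ℕ) :
    Summable (fun j : ℕ => ((j:ℝ) + 1) * (w ^ (j + 1 - m₀) - w ^ (j + 1))) := by
  have hwn : ‖w‖ < 1 := by rw [Real.norm_eq_abs, abs_of_pos hw0]; exact hw1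
  have hs0 : Summable (fun n : ℕ => w ^ n) := summable_geometric_of_lt_one hw0.le hw1
  have hs0' : Summable (fun n : ℕ => w ^ (n+1)) := (summable_nat_add_iff 1).mpr hs0
  have hs1 : Summable (fun n : ℕ => (n:ℝ) * w ^ n) := by
    simpa using summable_pow_mul_geometric_of_norm_lt_one 1 hwn
  have hv : Summable (fun j : ℕ => ((j:ℝ)+1) * w ^ (j+1)) := by
    have hveq : (fun j : ℕ => ((j:ℝ)+1) * w ^ (j+1))
        = fun j : ℕ => w * ((j:ℝ) * w ^ j) + w * w ^ j := by
      funext j; rw [pow_succ]; ring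
    rw [hveq]; exact (hs1.mul_left w).add (hs0.mul_left w)
  have hu : Summable (fun j : ℕ => ((j:ℝ)+1) * w ^ (j + 1 - m₀)) := by
    apply (summable_nat_add_iff m₀).mp
    have hueq : (fun i : ℕ => (((i + m₀ : ℕ):ℝ)+1) * w ^ ((i + m₀) + 1 - m₀))
        = fun i : ℕ => ((i:ℝ)+1) * w ^ (i+1) + (m₀:ℝ) * w ^ (i+1) := by
      funext i
      have h2 : (i + m₀) + 1 - m₀ = i + 1 := by omega
      rw [h2]; push_cast; ring
    rw [hueq]
    exact hv.add (hs0'.mul_left _)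
  have := hu.sub hv
  simpa [mul_sub] using this

end Helpers

/-- Theorem 2 (per-cycle form): in a synchronous D/M/1/D update-and-decide system with
arrival rate `λ`, service rate `μ`, and periodic decisions at rate `ν = m₀ λ`, the expected
sum of ages upon decisions over one arrival period equals
`m₀ ((1+m₀)/(2ν) + w₁/(ν(1-w₁)))` where `w₁ = e^{-μ(1-ρ₁)/ν}`. -/
theorem average_AuD_synchronous_DM1D
    {Ω : Type*} [MeasureSpace Ω] [IsProbabilityMeasure (ℙ : Measure Ω)]
    (lam μ ρ₁ : ℝ) (h0 : 0 < lam) (h1 : lam < μ)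
    (hρ : ρ₁ ∈ Set.Ioo (0 : ℝ) 1) (hfix : ρ₁ = Real.exp (-μ * (1 - ρ₁) / lam))
    (m₀ : ℕ) (hm₀ : 1 ≤ m₀)
    (T S : Ω → ℝ)
    (hTmeas : Measurable T) (hSmeas : Measurable S)
    (hTdist : Measure.map T ℙ = expMeasure (μ * (1 - ρ₁)))
    (hSdist : Measure.map S ℙ = expMeasure μ)
    (hindep : IndepFun T S ℙ) :
    ∫ ω, (∑' j : ℕ, (((j : ℝ) + 1) / ((m₀ : ℝ) * lam)) *
        (if T ω < ((j : ℝ) + 1) / ((m₀ : ℝ) * lam) ∧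
            ((j : ℝ) + 1) / ((m₀ : ℝ) * lam) ≤ max (T ω) (1 / lam) + S ω
          then (1 : ℝ) else 0)) ∂ℙ
      = (m₀ : ℝ) * ((1 + (m₀ : ℝ)) / (2 * ((m₀ : ℝ) * lam))
          + Real.exp (-μ * (1 - ρ₁) / ((m₀ : ℝ) * lam))
            / (((m₀ : ℝ) * lam) * (1 - Real.exp (-μ * (1 - ρ₁) / ((m₀ : ℝ) * lam))))) := by
  obtain ⟨hρ0, hρ1⟩ := hρ
  have hμ : 0 < μ := h0.trans h1
  have hm₀R : (1:ℝ) ≤ (m₀:ℝ) := by exact_mod_cast hm₀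
  have hm0ne : (m₀:ℝ) ≠ 0 := by linarith
  set ν : ℝ := (m₀:ℝ) * lam with hνdef
  have hν : 0 < ν := mul_pos (by linarith) h0
  set α : ℝ := μ * (1 - ρ₁) with hαdef
  have hα : 0 < α := mul_pos hμ (by linarith)
  have hαμ : α < μ := by rw [hαdef]; nlinarith
  set c : ℝ := 1 / lam with hcdef
  have hc : 0 < c := by rw [hcdef]; positivity
  have hrel : Real.exp (-(α * c)) = 1 - α / μ := by
    have h1' : -(α * c) = -μ * (1 - ρ₁) / lam := by rw [hαdef, hcdef]; ring
    rw [h1', ← hfix, hαdef]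
    field_simp
    ring
  set w : ℝ := Real.exp (-(α / ν)) with hwdef
  have hw0 : 0 < w := Real.exp_pos _
  have hw1 : w < 1 := by
    rw [hwdef]
    calc Real.exp (-(α / ν)) < Real.exp 0 := by
          apply Real.exp_lt_exp.mpr
          have : 0 < α / ν := by positivity
          linarith
      _ = 1 := Real.exp_zero
  have h1w : (0:ℝ) < 1 - w := by linarith
  have hwR : Real.exp (-μ * (1 - ρ₁) / ν) = w := by
    rw [hwdef]; congr 1; rw [hαdef]; ring
  rw [hwR]
  have hτpos : ∀ j : ℕ, 0 < ((j:ℝ)+1) / ν := fun j => by positivity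
  set A : ℕ → Set Ω := fun j =>
    {ω | T ω < ((j:ℝ)+1)/ν ∧ ((j:ℝ)+1)/ν ≤ max (T ω) c + S ω} with hAdef
  have hBmeas : ∀ τ : ℝ, MeasurableSet {p : ℝ × ℝ | p.1 < τ ∧ τ ≤ max p.1 c + p.2} := by
    intro τ
    have hset : {p : ℝ × ℝ | p.1 < τ ∧ τ ≤ max p.1 c + p.2}
        = {p : ℝ × ℝ | p.1 < τ} ∩ {p : ℝ × ℝ | τ ≤ max p.1 c + p.2} := rfl
    rw [hset]
    exact (measurableSet_lt measurable_fst measurable_const).inter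
      (measurableSet_le measurable_const
        ((measurable_fst.max measurable_const).add measurable_snd))
  have hA : ∀ j, MeasurableSet (A j) := by
    intro j
    have hpre : A j = (fun ω => (T ω, S ω)) ⁻¹'
        {p : ℝ × ℝ | p.1 < ((j:ℝ)+1)/ν ∧ ((j:ℝ)+1)/ν ≤ max p.1 c + p.2} := rfl
    rw [hpre]
    exact (hTmeas.prodMk hSmeas) (hBmeas _)
  have hmap : Measure.map (fun ω => (T ω, S ω)) ℙ = (expMeasure α).prod (expMeasure μ) := by
    rw [← hTdist, ← hSdist]
    exact (indepFun_iff_map_prod_eq_prod_map_map hTmeas.aemeasurable hSmeas.aemeasurable).mp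
      hindep
  have hPA : ∀ j : ℕ, ℙ (A j) = ENNReal.ofReal
      (Real.exp (-(α * max (((j:ℝ)+1)/ν - c) 0)) - Real.exp (-(α * (((j:ℝ)+1)/ν)))) := by
    intro j
    have hpre : A j = (fun ω => (T ω, S ω)) ⁻¹'
        {p : ℝ × ℝ | p.1 < ((j:ℝ)+1)/ν ∧ ((j:ℝ)+1)/ν ≤ max p.1 c + p.2} := rfl
    rw [hpre, ← Measure.map_apply (hTmeas.prodMk hSmeas) (hBmeas _), hmap]
    exact prob_core hα hαμ hc (hτpos j) hrel
  have hp_nonneg : ∀ j : ℕ,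
      0 ≤ Real.exp (-(α * max (((j:ℝ)+1)/ν - c) 0)) - Real.exp (-(α * (((j:ℝ)+1)/ν))) := by
    intro j
    have hmax : max (((j:ℝ)+1)/ν - c) 0 ≤ ((j:ℝ)+1)/ν := max_le (by linarith) (hτpos j).le
    have hle : -(α * (((j:ℝ)+1)/ν)) ≤ -(α * max (((j:ℝ)+1)/ν - c) 0) := by nlinarith
    linarith [Real.exp_le_exp.mpr hle]
  have hc_eq : c = (m₀:ℝ)/ν := by
    rw [hcdef, hνdef]; field_simp
  have hpw : ∀ j : ℕ,
      Real.exp (-(α * max (((j:ℝ)+1)/ν - c) 0)) - Real.exp (-(α * (((j:ℝ)+1)/ν)))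
        = w ^ (j + 1 - m₀) - w ^ (j + 1) := by
    intro j
    have h2 : Real.exp (-(α * (((j:ℝ)+1)/ν))) = w ^ (j+1) := by
      rw [hwdef, ← Real.exp_nat_mul]
      congr 1
      push_cast
      ring
    have h3 : Real.exp (-(α * max (((j:ℝ)+1)/ν - c) 0)) = w ^ (j + 1 - m₀) := by
      have hmaxval : max (((j:ℝ)+1)/ν - c) 0 = ((j + 1 - m₀ : ℕ):ℝ)/ν := by
        rw [hc_eq]
        rcases le_or_gt (j+1) m₀ with h | h
        · have hle : ((j:ℝ)+1) ≤ (m₀:ℝ) := by exact_mod_cast h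
          have hz : j + 1 - m₀ = 0 := by omega
          rw [hz, max_eq_right]
          · simp
          · rw [div_sub_div_same]
            apply div_nonpos_of_nonpos_of_nonneg (by linarith) hν.le
        · have hle : (m₀:ℝ) ≤ ((j:ℝ)+1) := by
            have : (m₀:ℝ) ≤ ((j:ℝ)+1) ↔ m₀ ≤ j + 1 := by exact_mod_cast Iff.rfl
            exact this.mpr (by omega)
          rw [max_eq_left]
          · rw [Nat.cast_sub (by omega)]
            push_cast
            rw [div_sub_div_same]
          · rw [div_sub_div_same]
            apply div_nonneg (by linarith) hν.le
      rw [hmaxval, hwdef, ← Real.exp_nat_mul]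
      congr 1; ring
    rw [h2, h3]
  set f : ℕ → Ω → ℝ := fun j ω =>
    (((j:ℝ)+1)/ν) * Set.indicator (A j) (fun _ => (1:ℝ)) ω with hfdef
  have hind : ∀ (j : ℕ) (ω : Ω),
      (if T ω < ((j:ℝ)+1)/ν ∧ ((j:ℝ)+1)/ν ≤ max (T ω) c + S ω then (1:ℝ) else 0)
        = Set.indicator (A j) (fun _ => (1:ℝ)) ω := by
    intro j ω
    by_cases h : T ω < ((j:ℝ)+1)/ν ∧ ((j:ℝ)+1)/ν ≤ max (T ω) c + S ω
    · rw [if_pos h, Set.indicator_of_mem (show ω ∈ A j from h)]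
    · rw [if_neg h, Set.indicator_of_notMem (show ω ∉ A j from h)]
  have hpoint : ∀ ω : Ω, (∑' j : ℕ, (((j:ℝ)+1)/ν) *
      (if T ω < ((j:ℝ)+1)/ν ∧ ((j:ℝ)+1)/ν ≤ max (T ω) c + S ω then (1:ℝ) else 0))
        = ∑' j : ℕ, f j ω := by
    intro ω
    exact tsum_congr fun j => by rw [hind j ω]
  have hf_int : ∀ j : ℕ, ∫ ω, f j ω ∂ℙ
      = (((j:ℝ)+1)/ν) * (w ^ (j+1-m₀) - w ^ (j+1)) := by
    intro j
    have h1 : ∫ ω, Set.indicator (A j) (fun _ => (1:ℝ)) ω ∂ℙ = (ℙ (A j)).toReal :=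
      MeasureTheory.integral_indicator_one (hA j)
    rw [hfdef]
    simp only
    rw [integral_const_mul, h1, hPA j,
      ENNReal.toReal_ofReal (hp_nonneg j), hpw j]
  have hf_meas : ∀ j : ℕ, AEStronglyMeasurable (f j) ℙ := by
    intro j
    exact (((measurable_const.indicator (hA j)).const_mul _)).aestronglyMeasurable
  have hterm_nonneg : ∀ j : ℕ, 0 ≤ (((j:ℝ)+1)/ν) * (w ^ (j+1-m₀) - w ^ (j+1)) := by
    intro j
    apply mul_nonneg (hτpos j).le
    rw [← hpw j]; exact hp_nonneg j
  have hsum : Summable (fun j : ℕ => (((j:ℝ)+1)/ν) * (w ^ (j+1-m₀) - w ^ (j+1))) := by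
    have heq : (fun j : ℕ => (((j:ℝ)+1)/ν) * (w ^ (j+1-m₀) - w ^ (j+1)))
        = fun j : ℕ => (1/ν) * (((j:ℝ)+1) * (w ^ (j+1-m₀) - w ^ (j+1))) := by
      funext j; ring
    rw [heq]
    exact (summable_series_core hw0 hw1 m₀).mul_left _
  have hf_lint : ∀ j : ℕ, ∫⁻ ω, ‖f j ω‖₊ ∂ℙ
      = ENNReal.ofReal ((((j:ℝ)+1)/ν) * (w ^ (j+1-m₀) - w ^ (j+1))) := by
    intro j
    have hptw : ∀ ω : Ω, (‖f j ω‖₊ : ℝ≥0∞)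
        = ENNReal.ofReal (((j:ℝ)+1)/ν) * Set.indicator (A j) (fun _ => (1:ENNReal)) ω := by
      intro ω
      by_cases h : ω ∈ A j
      · rw [hfdef]
        simp only [Set.indicator_of_mem h, mul_one]
        exact Real.enorm_eq_ofReal (hτpos j).le
      · rw [hfdef]
        simp only [Set.indicator_of_notMem h, mul_zero]
        simp
    rw [lintegral_congr hptw,
      lintegral_const_mul _ (measurable_const.indicator (hA j)),
      lintegral_indicator (hA j), setLIntegral_one, hPA j,
      ← ENNReal.ofReal_mul (hτpos j).le, hpw j]
  have hfin : (∑' j : ℕ, ∫⁻ ω, ‖f j ω‖₊ ∂ℙ) ≠ ⊤ := by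
    rw [tsum_congr hf_lint, ← ENNReal.ofReal_tsum_of_nonneg hterm_nonneg hsum]
    exact ENNReal.ofReal_ne_top
  rw [MeasureTheory.integral_congr_ae (Filter.Eventually.of_forall hpoint),
    MeasureTheory.integral_tsum hf_meas hfin, tsum_congr hf_int]
  have hsum_eq : (∑' j : ℕ, (((j:ℝ)+1)/ν) * (w ^ (j+1-m₀) - w ^ (j+1)))
      = (1/ν) * ((m₀:ℝ) * ((m₀:ℝ)+1) / 2 + (m₀:ℝ) * w / (1 - w)) := by
    have heq : (fun j : ℕ => (((j:ℝ)+1)/ν) * (w ^ (j+1-m₀) - w ^ (j+1)))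
        = fun j : ℕ => (1/ν) * (((j:ℝ)+1) * (w ^ (j+1-m₀) - w ^ (j+1))) := by
      funext j; ring
    rw [heq, tsum_mul_left, series_core hw0 hw1 m₀ hm₀]
  rw [hsum_eq]
  field_simp
  ring
end

section
/- Let 0 < λ < μ, let ρ₁ ∈ (0,1) satisfy ρ₁ = e^{−μ(1−ρ₁)/λ}, let m₀ ≥ 1 be an integer, and set ν = m₀λ, w₀ = e^{−μ/ν} and w₁ = e^{−μ(1−ρ₁)/ν}. Let T ~ Exp(μ(1−ρ₁)) and S ~ Exp(μ) be independent. Then P( S + max(1/λ − T, 0) < 1/ν ) = (ρ₁/(2−ρ₁))·(1/w₁ − w₀). -/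
open MeasureTheory ProbabilityTheory Set
open scoped ProbabilityTheory ENNReal

lemma expMeasure_Iio' {r : ℝ} (hr : 0 < r) (x : ℝ) :
    expMeasure r (Set.Iio x) = ENNReal.ofReal (if 0 ≤ x then 1 - Real.exp (-(r * x)) else 0) := by
  rw [expMeasure, gammaMeasure, withDensity_apply _ measurableSet_Iio,
    setLIntegral_congr Iio_ae_eq_Iic]
  exact lintegral_exponentialPDF_eq_antiDeriv hr x

lemma integral_rate_exp_Ioi' {a : ℝ} (ha : 0 < a) (c : ℝ) :
    ∫ t in Set.Ioi c, a * Real.exp (-(a * t)) = Real.exp (-(a * c)) := by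
  have h := integral_comp_mul_left_Ioi (fun x => Real.exp (-x)) c ha
  rw [integral_exp_neg_Ioi] at h
  rw [MeasureTheory.integral_const_mul, h, smul_eq_mul]
  field_simp

lemma hasDerivAt_exp_lin' (r t : ℝ) :
    HasDerivAt (fun x : ℝ => Real.exp (-(r * x))) (-r * Real.exp (-(r * t))) t := by
  have h := (((hasDerivAt_id t).const_mul (-r)).exp)
  simpa [neg_mul, mul_comm] using h

lemma measurable_exponentialPDF' (r : ℝ) : Measurable (exponentialPDF r) :=
  (measurable_exponentialPDFReal r).ennreal_ofReal

lemma exponentialPDFReal_eq' (r x : ℝ) :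
    exponentialPDFReal r x = if 0 ≤ x then r * Real.exp (-(r * x)) else 0 := by
  rw [exponentialPDFReal, gammaPDFReal]
  simp only [Real.rpow_one, Real.Gamma_one, div_one, sub_self, Real.rpow_zero, mul_one]

lemma lintegral_expMeasure' {r : ℝ} (f : ℝ → ℝ≥0∞) (hf : Measurable f) :
    ∫⁻ t, f t ∂(expMeasure r) = ∫⁻ t, exponentialPDF r t * f t := by
  rw [expMeasure, gammaMeasure]
  exact lintegral_withDensity_eq_lintegral_mul _ ((measurable_gammaPDFReal 1 r).ennreal_ofReal) hf

/-- Proposition 4: missing probability of a synchronous D/M/1/D update-and-decide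
system with periodic decisions of rate `ν = m₀ λ`:
`P(S + max (1/λ - T) 0 < 1/ν) = (ρ₁/(2-ρ₁)) (1/w₁ - w₀)`. -/
theorem missing_probability_DM1D
    {Ω : Type*} [MeasureSpace Ω] [IsProbabilityMeasure (ℙ : Measure Ω)]
    (lam μ ρ₁ : ℝ) (h0 : 0 < lam) (h1 : lam < μ)
    (hρ : ρ₁ ∈ Set.Ioo (0 : ℝ) 1) (hfix : ρ₁ = Real.exp (-μ * (1 - ρ₁) / lam))
    (m₀ : ℕ) (hm₀ : 1 ≤ m₀)
    (T S : Ω → ℝ)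
    (hTmeas : Measurable T) (hSmeas : Measurable S)
    (hTdist : Measure.map T ℙ = expMeasure (μ * (1 - ρ₁)))
    (hSdist : Measure.map S ℙ = expMeasure μ)
    (hindep : IndepFun T S ℙ) :
    (ℙ {ω | S ω + max (1 / lam - T ω) 0 < 1 / ((m₀ : ℝ) * lam)}).toReal
      = ρ₁ / (2 - ρ₁) * (1 / Real.exp (-μ * (1 - ρ₁) / ((m₀ : ℝ) * lam))
          - Real.exp (-μ / ((m₀ : ℝ) * lam))) := by
  obtain ⟨hρ0, hρ1⟩ := hρ
  have hμ : 0 < μ := h0.trans h1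
  set a : ℝ := μ * (1 - ρ₁) with ha_def
  have ha : 0 < a := mul_pos hμ (by linarith)
  set c : ℝ := 1 / lam with hc_def
  set d : ℝ := 1 / ((m₀ : ℝ) * lam) with hd_def
  have hm : (1:ℝ) ≤ (m₀:ℝ) := by exact_mod_cast hm₀
  have hml : 0 < (m₀:ℝ) * lam := by nlinarith
  have hd : 0 < d := by rw [hd_def]; positivity
  have hc : 0 < c := by rw [hc_def]; positivity
  have hdc : d ≤ c := by
    rw [hd_def, hc_def]
    apply one_div_le_one_div_of_le h0
    nlinarith
  have hcd0 : 0 ≤ c - d := by linarith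
  have hPa : IsProbabilityMeasure (expMeasure a) := isProbabilityMeasure_expMeasure ha
  have hPb : IsProbabilityMeasure (expMeasure μ) := isProbabilityMeasure_expMeasure hμ
  set A : Set (ℝ × ℝ) := {p : ℝ × ℝ | p.2 + max (c - p.1) 0 < d} with hA_def
  have hA : MeasurableSet A :=
    measurableSet_lt
      (measurable_snd.add ((measurable_const.sub measurable_fst).max measurable_const))
      measurable_const
  have hmapTS : Measure.map (fun ω => (T ω, S ω)) ℙ = (expMeasure a).prod (expMeasure μ) := by
    rw [← hTdist, ← hSdist]
    exact (indepFun_iff_map_prod_eq_prod_map_map hTmeas.aemeasurable hSmeas.aemeasurable).mp hindep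
  have hev : ℙ {ω | S ω + max (c - T ω) 0 < d} = ((expMeasure a).prod (expMeasure μ)) A := by
    rw [← hmapTS, Measure.map_apply (hTmeas.prodMk hSmeas) hA]
    rfl
  set f : ℝ → ℝ := fun t => if c - d ≤ t then 1 - Real.exp (-(μ * (d - max (c - t) 0))) else 0
    with hf_def
  have hiff : ∀ t : ℝ, (0 ≤ d - max (c - t) 0) ↔ c - d ≤ t := by
    intro t
    rw [sub_nonneg, max_le_iff]
    constructor
    · rintro ⟨h1, _⟩; linarith
    · intro h; exact ⟨by linarith, hd.le⟩
  have hslice : ∀ t : ℝ, expMeasure μ (Prod.mk t ⁻¹' A) = ENNReal.ofReal (f t) := by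
    intro t
    have hset : Prod.mk t ⁻¹' A = Set.Iio (d - max (c - t) 0) := by
      ext s
      simp only [hA_def, Set.mem_preimage, Set.mem_setOf_eq, Set.mem_Iio]
      constructor <;> intro h <;> linarith
    rw [hset, expMeasure_Iio' hμ]
    congr 1
    by_cases h : c - d ≤ t
    · rw [hf_def]; simp only
      rw [if_pos h, if_pos ((hiff t).mpr h)]
    · rw [hf_def]; simp only
      rw [if_neg h, if_neg (fun hh => h ((hiff t).mp hh))]
  have hfmeas : Measurable f := by
    apply Measurable.ite (measurableSet_le measurable_const measurable_id) _ measurable_const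
    fun_prop
  have hf0 : ∀ t, 0 ≤ f t := by
    intro t
    rw [hf_def]; simp only
    split_ifs with h
    · have hx : 0 ≤ d - max (c - t) 0 := (hiff t).mpr h
      have : Real.exp (-(μ * (d - max (c - t) 0))) ≤ 1 := by
        rw [Real.exp_le_one_iff]
        nlinarith
      linarith
    · exact le_refl 0
  have hf1 : ∀ t, f t ≤ 1 := by
    intro t
    rw [hf_def]; simp only
    split_ifs with h
    · have := Real.exp_pos (-(μ * (d - max (c - t) 0)))
      linarith
    · exact zero_le_one
  set g : ℝ → ℝ := fun t => exponentialPDFReal a t * f t with hg_def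
  have hgmeas : Measurable g := (measurable_exponentialPDFReal a).mul hfmeas
  have hg0 : ∀ t, 0 ≤ g t := fun t =>
    mul_nonneg (exponentialPDFReal_nonneg ha t) (hf0 t)
  have hcalc : (ℙ {ω | S ω + max (c - T ω) 0 < d}).toReal = ∫ t, g t := by
    rw [hev, Measure.prod_apply hA]
    simp_rw [hslice]
    rw [lintegral_expMeasure' _ (hfmeas.ennreal_ofReal)]
    have hpt : ∀ t, exponentialPDF a t * ENNReal.ofReal (f t) = ENNReal.ofReal (g t) := by
      intro t
      rw [hg_def]; simp only
      rw [ENNReal.ofReal_mul (exponentialPDFReal_nonneg ha t)]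
      rfl
    simp_rw [hpt]
    rw [← integral_eq_lintegral_of_nonneg_ae (ae_of_all _ hg0) hgmeas.aestronglyMeasurable]
  rw [hcalc]
  -- restrict to the support
  have hgzero : ∀ t ∉ Set.Ioi (c - d), g t = 0 := by
    intro t ht
    simp only [Set.mem_Ioi, not_lt] at ht
    rcases eq_or_lt_of_le ht with h | h
    · have hft : f t = 0 := by
        rw [hf_def]; simp only
        rw [if_pos (le_of_eq h.symm), show c - t = d by linarith, max_eq_left hd.le]
        simp
      rw [hg_def]; simp only [hft, mul_zero]
    · have hft : f t = 0 := by
        rw [hf_def]; simp only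
        rw [if_neg (by linarith)]
      rw [hg_def]; simp only [hft, mul_zero]
  rw [← setIntegral_eq_integral_of_forall_compl_eq_zero hgzero]
  -- integrability
  have hdom : IntegrableOn (fun t => a * Real.exp (-(a * t))) (Set.Ioi (c - d)) := by
    have h := (exp_neg_integrableOn_Ioi (c - d) ha).const_mul a
    simp only [neg_mul] at h
    exact h
  have hgb : ∀ t, ‖g t‖ ≤ ‖a * Real.exp (-(a * t))‖ := by
    intro t
    rw [Real.norm_eq_abs, Real.norm_eq_abs, abs_of_nonneg (hg0 t),
      abs_of_nonneg (by positivity)]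
    calc g t ≤ exponentialPDFReal a t :=
          mul_le_of_le_one_right (exponentialPDFReal_nonneg ha t) (hf1 t)
      _ ≤ a * Real.exp (-(a * t)) := by
          rw [exponentialPDFReal_eq']
          split_ifs with h
          · exact le_refl _
          · positivity
  have hgint : IntegrableOn g (Set.Ioi (c - d)) :=
    Integrable.mono hdom hgmeas.aestronglyMeasurable.restrict (ae_of_all _ hgb)
  -- split the integral
  have hsplit : ∫ t in Set.Ioi (c - d), g t
      = (∫ t in Set.Ioc (c - d) c, g t) + ∫ t in Set.Ioi c, g t := by
    rw [← Set.Ioc_union_Ioi_eq_Ioi (by linarith : c - d ≤ c)]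
    rw [setIntegral_union (Set.Ioc_disjoint_Ioi le_rfl) measurableSet_Ioi
      (hgint.mono_set Set.Ioc_subset_Ioi_self)
      (hgint.mono_set (Set.Ioi_subset_Ioi (by linarith)))]
  rw [hsplit]
  -- the tail piece
  have hpiece2 : ∫ t in Set.Ioi c, g t
      = (1 - Real.exp (-(μ * d))) * Real.exp (-(a * c)) := by
    have hcongr : ∀ t ∈ Set.Ioi c, g t
        = (1 - Real.exp (-(μ * d))) * (a * Real.exp (-(a * t))) := by
      intro t ht
      simp only [Set.mem_Ioi] at ht
      have hft : f t = 1 - Real.exp (-(μ * d)) := by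
        rw [hf_def]; simp only
        rw [if_pos (by linarith), max_eq_right (by linarith : c - t ≤ 0), sub_zero]
      have hpdf : exponentialPDFReal a t = a * Real.exp (-(a * t)) := by
        rw [exponentialPDFReal_eq', if_pos (by linarith : (0:ℝ) ≤ t)]
      rw [hg_def]; simp only [hft, hpdf]; ring
    rw [setIntegral_congr_fun measurableSet_Ioi hcongr, MeasureTheory.integral_const_mul,
      integral_rate_exp_Ioi' ha c]
  -- the middle piece via FTC
  set H : ℝ → ℝ := fun t => -Real.exp (-(a * t))
      + a / (a + μ) * Real.exp (-(μ * (d - c))) * Real.exp (-((a + μ) * t)) with hH_def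
  have hpiece1 : ∫ t in Set.Ioc (c - d) c, g t = H c - H (c - d) := by
    have hcongr : ∀ t ∈ Set.Ioc (c - d) c, g t
        = a * Real.exp (-(a * t))
          - a * Real.exp (-(μ * (d - c))) * Real.exp (-((a + μ) * t)) := by
      intro t ht
      obtain ⟨ht1, ht2⟩ := ht
      have hft : f t = 1 - Real.exp (-(μ * (d - (c - t)))) := by
        rw [hf_def]; simp only
        rw [if_pos ht1.le, max_eq_left (by linarith : (0:ℝ) ≤ c - t)]
      have hpdf : exponentialPDFReal a t = a * Real.exp (-(a * t)) := by
        rw [exponentialPDFReal_eq', if_pos (by linarith : (0:ℝ) ≤ t)]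
      rw [hg_def]; simp only [hft, hpdf]
      have key : Real.exp (-(a * t)) * Real.exp (-(μ * (d - (c - t))))
          = Real.exp (-(μ * (d - c))) * Real.exp (-((a + μ) * t)) := by
        rw [← Real.exp_add, ← Real.exp_add]
        congr 1
        ring
      linear_combination (-a) * key
    rw [setIntegral_congr_fun measurableSet_Ioc hcongr,
      ← intervalIntegral.integral_of_le (by linarith : c - d ≤ c)]
    apply intervalIntegral.integral_eq_sub_of_hasDerivAt
    · intro t _
      have h1 := (hasDerivAt_exp_lin' a t).neg
      have h2 := (hasDerivAt_exp_lin' (a + μ) t).const_mul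
        (a / (a + μ) * Real.exp (-(μ * (d - c))))
      have h3 := h1.add h2
      convert h3 using 1
      · rw [hH_def]; rfl
      have haμ : a + μ ≠ 0 := by positivity
      have hq : a / (a + μ) * (a + μ) = a := div_mul_cancel₀ a haμ
      rw [show a / (a + μ) * Real.exp (-(μ * (d - c))) * (-(a + μ) * Real.exp (-((a + μ) * t)))
        = -(a / (a + μ) * (a + μ)) * (Real.exp (-(μ * (d - c))) * Real.exp (-((a + μ) * t))) by ring, hq]
      ring
    · apply Continuous.intervalIntegrable
      fun_prop
  rw [hpiece1, hpiece2]
  -- final algebra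
  have hρexp : Real.exp (-(a * c)) = ρ₁ := by
    rw [hfix]
    congr 1
    rw [ha_def, hc_def]
    field_simp
  have hY : (1:ℝ) / Real.exp (-μ * (1 - ρ₁) / ((m₀:ℝ) * lam)) = Real.exp (a * d) := by
    rw [show -μ * (1 - ρ₁) / ((m₀:ℝ) * lam) = -(a * d) by rw [ha_def, hd_def]; field_simp]
    rw [Real.exp_neg, one_div, inv_inv]
  have hX : Real.exp (-μ / ((m₀:ℝ) * lam)) = Real.exp (-(μ * d)) := by
    congr 1
    rw [hd_def]
    field_simp
  rw [hY, hX, hH_def]; simp only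
  have e1 : Real.exp (-(a * (c - d))) = ρ₁ * Real.exp (a * d) := by
    rw [← hρexp, ← Real.exp_add]
    congr 1
    ring
  have e2 : Real.exp (-(μ * (d - c))) * Real.exp (-((a + μ) * c))
      = ρ₁ * Real.exp (-(μ * d)) := by
    rw [← hρexp, ← Real.exp_add, ← Real.exp_add]
    congr 1
    rw [ha_def]
    ring
  have e3 : Real.exp (-(μ * (d - c))) * Real.exp (-((a + μ) * (c - d)))
      = ρ₁ * Real.exp (a * d) := by
    rw [← hρexp, ← Real.exp_add, ← Real.exp_add]
    congr 1
    rw [ha_def]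
    ring
  have e2' : a / (a + μ) * Real.exp (-(μ * (d - c))) * Real.exp (-((a + μ) * c))
      = a / (a + μ) * (ρ₁ * Real.exp (-(μ * d))) := by
    rw [mul_assoc, e2]
  have e3' : a / (a + μ) * Real.exp (-(μ * (d - c))) * Real.exp (-((a + μ) * (c - d)))
      = a / (a + μ) * (ρ₁ * Real.exp (a * d)) := by
    rw [mul_assoc, e3]
  rw [e2', e3', e1, hρexp]
  rw [ha_def]
  have h2ρ : (2:ℝ) - ρ₁ ≠ 0 := by linarith
  have haμ' : μ * (1 - ρ₁) + μ ≠ 0 := by positivity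
  field_simp
  ring
end

section
/- Let 0 < λ < μ and let ρ₁ ∈ (0,1) satisfy ρ₁ = e^{−μ(1−ρ₁)/λ}. Then for every integer m₀ ≥ 1, with ν = m₀λ and w₁ = e^{−μ(1−ρ₁)/ν}, it holds that (1+m₀)/(2ν) + w₁/(ν(1−w₁)) > 1/(2λ) + 1/(μ(1−ρ₁)). -/
lemma aux_deriv_pos : StrictMonoOn (fun x : ℝ => (x - 1) * Real.exp x + 1) (Set.Ici 0) := by
  apply strictMonoOn_of_deriv_pos (convex_Ici 0)
  · fun_prop
  · intro y hy
    rw [interior_Ici] at hy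
    have h : HasDerivAt (fun x : ℝ => (x - 1) * Real.exp x + 1) (y * Real.exp y) y := by
      have := (((hasDerivAt_id y).sub_const 1).mul (Real.hasDerivAt_exp y)).add_const 1
      refine this.congr_deriv ?_
      simp only [id_eq]; ring
    rw [h.deriv]
    exact mul_pos hy (Real.exp_pos y)

lemma aux_g_mono : StrictMonoOn (fun x : ℝ => (x - 2) * Real.exp x + x + 2) (Set.Ici 0) := by
  apply strictMonoOn_of_deriv_pos (convex_Ici 0)
  · fun_prop
  · intro y hy
    rw [interior_Ici] at hy
    have h : HasDerivAt (fun x : ℝ => (x - 2) * Real.exp x + x + 2)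
        ((y - 1) * Real.exp y + 1) y := by
      have := ((((hasDerivAt_id y).sub_const 2).mul (Real.hasDerivAt_exp y)).add
        (hasDerivAt_id y)).add_const 2
      refine this.congr_deriv ?_
      simp only [id_eq]; ring
    rw [h.deriv]
    have h0 : (fun x : ℝ => (x - 1) * Real.exp x + 1) 0 <
        (fun x : ℝ => (x - 1) * Real.exp x + 1) y :=
      aux_deriv_pos (Set.self_mem_Ici) (Set.mem_Ici.mpr hy.le) hy
    simpa using h0

lemma key_ineq (x : ℝ) (hx : 0 < x) : 0 < (x - 2) * Real.exp x + x + 2 := by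
  have h0 : (fun x : ℝ => (x - 2) * Real.exp x + x + 2) 0 <
      (fun x : ℝ => (x - 2) * Real.exp x + x + 2) x :=
    aux_g_mono (Set.self_mem_Ici) (Set.mem_Ici.mpr hx.le) hx
  simpa using h0

/-- The average age upon decisions of a synchronous D/M/1/D system with periodic
decisions of rate `ν = m₀ λ` is strictly larger than `1/(2λ) + 1/(μ(1-ρ₁))`, the average
age upon decisions of the corresponding D/M/1/M system with Poisson decisions. -/
theorem periodic_decisions_worse_than_poisson
    (lam μ ρ₁ : ℝ) (h0 : 0 < lam) (h1 : lam < μ)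
    (hρ : ρ₁ ∈ Set.Ioo (0 : ℝ) 1) (hfix : ρ₁ = Real.exp (-μ * (1 - ρ₁) / lam)) :
    ∀ m₀ : ℕ, 1 ≤ m₀ →
      (1 + (m₀ : ℝ)) / (2 * ((m₀ : ℝ) * lam))
          + Real.exp (-μ * (1 - ρ₁) / ((m₀ : ℝ) * lam))
            / (((m₀ : ℝ) * lam) * (1 - Real.exp (-μ * (1 - ρ₁) / ((m₀ : ℝ) * lam))))
        > 1 / (2 * lam) + 1 / (μ * (1 - ρ₁)) := by
  intro m₀ hm
  have hm0 : (0 : ℝ) < (m₀ : ℝ) := by exact_mod_cast Nat.lt_of_lt_of_le Nat.zero_lt_one hm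
  set ν : ℝ := (m₀ : ℝ) * lam with hνdef
  have hν : 0 < ν := mul_pos hm0 h0
  have hμ : 0 < μ := h0.trans h1
  have hρ1 : ρ₁ < 1 := hρ.2
  set θ : ℝ := μ * (1 - ρ₁) with hθdef
  have hθ : 0 < θ := mul_pos hμ (by linarith)
  set x : ℝ := θ / ν with hxdef
  have hx : 0 < x := div_pos hθ hν
  have hxθ : θ = x * ν := by rw [hxdef, div_mul_cancel₀ _ hν.ne']
  set E : ℝ := Real.exp x with hEdef
  have hE1 : 1 < E := by
    rw [hEdef, ← Real.exp_zero]; exact Real.exp_lt_exp.mpr hx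
  have hEpos : 0 < E := lt_trans one_pos hE1
  have hargs : -μ * (1 - ρ₁) / ((m₀ : ℝ) * lam) = -x := by
    rw [hxdef, hθdef, hνdef]; ring
  rw [hargs]
  have hterm : Real.exp (-x) / (ν * (1 - Real.exp (-x))) = 1 / (ν * (E - 1)) := by
    rw [Real.exp_neg, ← hEdef]
    rw [div_eq_div_iff]
    · field_simp
    · have h1E : (1:ℝ)/E < 1 := by
        rw [div_lt_one hEpos]; exact hE1
      have : 0 < 1 - E⁻¹ := by
        have : E⁻¹ < 1 := by rw [inv_lt_one_iff₀]; right; exact hE1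
        linarith
      positivity
    · have : 0 < E - 1 := by linarith
      positivity
  rw [hterm]
  have hkey := key_ineq x hx
  rw [← hEdef] at hkey
  have hmain : 1 / θ < 1 / (2 * ν) + 1 / (ν * (E - 1)) := by
    have hE1' : 0 < E - 1 := by linarith
    rw [div_add_div _ _ (by positivity) (by positivity), div_lt_div_iff₀ hθ (by positivity), hxθ]
    nlinarith [mul_pos (mul_pos hν hν) hkey]
  have hsplit : (1 + (m₀ : ℝ)) / (2 * ν) = 1 / (2 * lam) + 1 / (2 * ν) := by
    rw [hνdef]
    field_simp
    ring
  rw [hsplit]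
  linarith
end

section
/- Let 0 < λ < μ and let ρ₁ ∈ (0,1) satisfy ρ₁ = e^{−μ(1−ρ₁)/λ}. For each integer m₀ ≥ 1 set ν(m₀) = m₀λ and w₁(m₀) = e^{−μ(1−ρ₁)/ν(m₀)}. Then the sequence m₀ ↦ (1+m₀)/(2ν(m₀)) + w₁(m₀)/(ν(m₀)(1−w₁(m₀))) is strictly decreasing in m₀. -/
open Real Set

lemma aux_sinh_lt (t : ℝ) (ht : 0 < t) : Real.sinh t < t * Real.cosh t := by
  have h : StrictMonoOn (fun t : ℝ => t * Real.cosh t - Real.sinh t) (Set.Ici 0) := by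
    apply strictMonoOn_of_deriv_pos (convex_Ici 0)
    · fun_prop
    · intro x hx
      rw [interior_Ici] at hx
      replace hx : 0 < x := hx
      have hd : HasDerivAt (fun t : ℝ => t * Real.cosh t - Real.sinh t)
          (1 * Real.cosh x + x * Real.sinh x - Real.cosh x) x :=
        ((hasDerivAt_id x).mul (Real.hasDerivAt_cosh x)).sub (Real.hasDerivAt_sinh x)
      rw [hd.deriv]
      have := Real.sinh_pos_iff.2 hx
      nlinarith
  have := h Set.self_mem_Ici (Set.mem_Ici.2 ht.le) ht
  simpa using this

lemma aux_sinh_div_mono : StrictMonoOn (fun t : ℝ => Real.sinh t / t) (Set.Ioi 0) := by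
  apply strictMonoOn_of_deriv_pos (convex_Ioi 0)
  · exact ContinuousOn.div (by fun_prop) (by fun_prop) (fun x hx => ne_of_gt hx)
  · intro x hx
    rw [interior_Ioi] at hx
    replace hx : 0 < x := hx
    have hd : HasDerivAt (fun t : ℝ => Real.sinh t / t)
        ((Real.cosh x * x - Real.sinh x * 1) / x ^ 2) x :=
      (Real.hasDerivAt_sinh x).div (hasDerivAt_id x) (ne_of_gt hx)
    rw [hd.deriv]
    have h1 := aux_sinh_lt x hx
    have h2 : (0:ℝ) < x ^ 2 := pow_pos hx 2
    exact div_pos (by nlinarith) h2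

lemma aux_tcoth (v u : ℝ) (hv : 0 < v) (huv : v < u) :
    v * Real.cosh v / Real.sinh v < u * Real.cosh u / Real.sinh u := by
  have hu : 0 < u := hv.trans huv
  have hsv := Real.sinh_pos_iff.2 hv
  have hsu := Real.sinh_pos_iff.2 hu
  rw [div_lt_div_iff₀ hsv hsu]
  have h1 : Real.sinh (u - v) / (u - v) < Real.sinh (u + v) / (u + v) :=
    aux_sinh_div_mono (Set.mem_Ioi.2 (by linarith)) (Set.mem_Ioi.2 (by linarith))
      (by linarith)
  rw [div_lt_div_iff₀ (by linarith) (by linarith)] at h1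
  have e1 := Real.sinh_add u v
  have e2 := Real.sinh_sub u v
  nlinarith [h1, e1, e2]

lemma aux_phi_eq (t : ℝ) (ht : 0 < t) :
    t / 2 + t / (Real.exp t - 1) = (t / 2) * Real.cosh (t / 2) / Real.sinh (t / 2) := by
  have hs : 0 < Real.sinh (t / 2) := Real.sinh_pos_iff.2 (by linarith)
  have he : 0 < Real.exp t - 1 := by
    have : (1:ℝ) < Real.exp t := by
      calc (1:ℝ) = Real.exp 0 := Real.exp_zero.symm
      _ < Real.exp t := Real.exp_lt_exp.2 ht
    linarith
  have hE : Real.exp (t/2) * Real.exp (t/2) = Real.exp t := by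
    rw [← Real.exp_add]; ring_nf
  have hEpos : 0 < Real.exp (t/2) := Real.exp_pos _
  have hE1 : 1 < Real.exp (t/2) := by
    calc (1:ℝ) = Real.exp 0 := Real.exp_zero.symm
    _ < Real.exp (t/2) := Real.exp_lt_exp.2 (by linarith)
  have hd : 0 < Real.exp (t/2) - (Real.exp (t/2))⁻¹ := by
    have : (Real.exp (t/2))⁻¹ < 1 := by
      rw [inv_lt_one_iff₀]; right; exact hE1
    linarith
  rw [Real.cosh_eq, Real.sinh_eq, Real.exp_neg, ← hE]
  have hne : Real.exp (t/2) * Real.exp (t/2) - 1 ≠ 0 := by nlinarith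
  have hdne : Real.exp (t/2) - (Real.exp (t/2))⁻¹ ≠ 0 := ne_of_gt hd
  have hE0 : Real.exp (t/2) ≠ 0 := ne_of_gt hEpos
  field_simp [hne, hdne]
  rw [add_div' _ _ _ (by nlinarith)]
  ring

lemma aux_phi_mono (y x : ℝ) (hy : 0 < y) (hyx : y < x) :
    y / 2 + y / (Real.exp y - 1) < x / 2 + x / (Real.exp x - 1) := by
  rw [aux_phi_eq y hy, aux_phi_eq x (hy.trans hyx)]
  exact aux_tcoth (y/2) (x/2) (by linarith) (by linarith)

lemma aux_term (lam c ν : ℝ) (hl : 0 < lam) (hc : 0 < c) (hν : 0 < ν) :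
    (1 + ν / lam) / (2 * ν)
        + Real.exp (-(c / ν)) / (ν * (1 - Real.exp (-(c / ν))))
      = 1 / (2 * lam) + (1 / c) * (c / ν / 2 + (c / ν) / (Real.exp (c / ν) - 1)) := by
  have hx : 0 < c / ν := div_pos hc hν
  have hE1 : 1 < Real.exp (c / ν) := by
    calc (1:ℝ) = Real.exp 0 := Real.exp_zero.symm
    _ < Real.exp (c / ν) := Real.exp_lt_exp.2 hx
  have hEne : Real.exp (c / ν) - 1 ≠ 0 := by intro h; linarith [sub_eq_zero.mp h]
  have hE0 : Real.exp (c / ν) ≠ 0 := ne_of_gt (Real.exp_pos _)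
  have hw : 1 - Real.exp (-(c / ν)) ≠ 0 := by
    rw [Real.exp_neg]
    have : (Real.exp (c / ν))⁻¹ < 1 := by
      rw [inv_lt_one_iff₀]; right; exact hE1
    intro h; linarith [this, sub_eq_zero.mp h]
  rw [Real.exp_neg]
  rw [Real.exp_neg] at hw
  field_simp
  ring

/-- The average age upon decisions of the synchronous D/M/1/D system with periodic
decisions of rate `ν = m₀ λ` is strictly decreasing in `m₀` (for `m₀ ≥ 1`). -/
theorem periodic_decisions_AuD_strictAnti
    (lam μ ρ₁ : ℝ) (h0 : 0 < lam) (h1 : lam < μ)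
    (hρ : ρ₁ ∈ Set.Ioo (0 : ℝ) 1) (hfix : ρ₁ = Real.exp (-μ * (1 - ρ₁) / lam)) :
    StrictAntiOn
      (fun m₀ : ℕ =>
        (1 + (m₀ : ℝ)) / (2 * ((m₀ : ℝ) * lam))
          + Real.exp (-μ * (1 - ρ₁) / ((m₀ : ℝ) * lam))
            / (((m₀ : ℝ) * lam) * (1 - Real.exp (-μ * (1 - ρ₁) / ((m₀ : ℝ) * lam)))))
      (Set.Ici 1) := by
  intro a ha b hb hab
  simp only
  set c := μ * (1 - ρ₁) with hcdef
  have hμ : 0 < μ := h0.trans h1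
  have hc : 0 < c := mul_pos hμ (by linarith [hρ.2])
  have haR : (0:ℝ) < (a:ℝ) := by exact_mod_cast lt_of_lt_of_le Nat.zero_lt_one ha
  have hbR : (0:ℝ) < (b:ℝ) := by exact_mod_cast lt_of_lt_of_le Nat.zero_lt_one hb
  have habR : (a:ℝ) < (b:ℝ) := by exact_mod_cast hab
  have hνa : 0 < (a:ℝ) * lam := mul_pos haR h0
  have hνb : 0 < (b:ℝ) * lam := mul_pos hbR h0
  have harg : ∀ t : ℝ, -μ * (1 - ρ₁) / t = -(c / t) := by
    intro t; rw [hcdef]; ring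
  have hnum : ∀ m : ℕ, (0:ℝ) < m → (1 + (m:ℝ)) = 1 + ((m:ℝ) * lam) / lam := by
    intro m hm; field_simp
  rw [harg, harg, hnum a haR, hnum b hbR,
    aux_term lam c ((a:ℝ) * lam) h0 hc hνa, aux_term lam c ((b:ℝ) * lam) h0 hc hνb]
  have hxlt : c / ((b:ℝ) * lam) < c / ((a:ℝ) * lam) :=
    div_lt_div_of_pos_left hc hνa (by nlinarith)
  have hxb : 0 < c / ((b:ℝ) * lam) := div_pos hc hνb
  have := aux_phi_mono _ _ hxb hxlt
  have h1c : 0 < 1 / c := by positivity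
  nlinarith [mul_lt_mul_of_pos_left this h1c]
end
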